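/- arXiv:1801.03221 — 8 statements merged into one kernel-verified Lean document; each statement's English description precedes it below -/
import Mathlib

section
/- Let ℓ be a prime number, n ≥ 1 an integer, and c a rational number with c > 1/(ℓ−1). Let U be an n × n matrix over K such that every entry of U − 1 has norm at most ℓ^{−c} (where 1 denotes the identity matrix and ℓ^{−c} is the real number (ℓ:ℝ) raised to the power −c). If U is quasi-unipotent, then U is unipotent. -/
open IsUltrametricDist Polynomial Finset Matrix in
/-- For a prime `q ≠ ℓ`, the norm of `q` in `K` is at least 1 (hence = 1). -/
lemma aux_norm_prime_ge (ℓ : ℕ) (hℓprime : ℓ.Prime)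
    (K : Type*) [NormedField K] [IsUltrametricDist K]
    (hnorm : ‖(ℓ : K)‖ = (ℓ : ℝ)⁻¹)
    (q : ℕ) (hq : q.Prime) (hne : q ≠ ℓ) : 1 ≤ ‖(q : K)‖ := by
  have hcop : Nat.Coprime q ℓ := (Nat.coprime_primes hq hℓprime).mpr hne
  have hgcd : Int.gcd (q : ℤ) (ℓ : ℤ) = 1 := by
    simpa [Int.gcd_natCast_natCast] using hcop
  have hbez := Int.gcd_eq_gcd_ab (q : ℤ) (ℓ : ℤ)
  rw [hgcd] at hbez
  -- (1 : ℤ) = q * a + ℓ * b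
  have hK : (1 : K) = (q : K) * ((Int.gcdA q ℓ : ℤ) : K) + (ℓ : K) * ((Int.gcdB q ℓ : ℤ) : K) := by
    have := congrArg (fun z : ℤ => (z : K)) hbez
    push_cast at this ⊢
    simpa using this
  have hℓlt : ‖(ℓ : K)‖ * ‖((Int.gcdB q ℓ : ℤ) : K)‖ < 1 := by
    have h1 : ‖((Int.gcdB q ℓ : ℤ) : K)‖ ≤ 1 := norm_intCast_le_one K _
    have hℓ2 : (2 : ℝ) ≤ (ℓ : ℝ) := by exact_mod_cast hℓprime.two_le
    have : ‖(ℓ : K)‖ < 1 := by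
      rw [hnorm]
      rw [inv_lt_one_iff₀]; right; linarith
    calc ‖(ℓ : K)‖ * ‖((Int.gcdB q ℓ : ℤ) : K)‖ ≤ ‖(ℓ : K)‖ * 1 := by
          exact mul_le_mul_of_nonneg_left h1 (norm_nonneg _)
      _ < 1 := by simpa using this
  have hmax : (1 : ℝ) ≤ max (‖(q : K)‖ * ‖((Int.gcdA q ℓ : ℤ) : K)‖)
      (‖(ℓ : K)‖ * ‖((Int.gcdB q ℓ : ℤ) : K)‖) := by
    have := IsUltrametricDist.norm_add_le_max ((q : K) * ((Int.gcdA q ℓ : ℤ) : K))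
      ((ℓ : K) * ((Int.gcdB q ℓ : ℤ) : K))
    calc (1 : ℝ) = ‖(1 : K)‖ := by simp
      _ = ‖(q : K) * ((Int.gcdA q ℓ : ℤ) : K) + (ℓ : K) * ((Int.gcdB q ℓ : ℤ) : K)‖ := by
          rw [← hK]
      _ ≤ _ := by simpa [norm_mul] using this
  have h1q : 1 ≤ ‖(q : K)‖ * ‖((Int.gcdA q ℓ : ℤ) : K)‖ := by
    rcases le_max_iff.mp hmax with h | h
    · exact h
    · linarith
  have ha : ‖((Int.gcdA q ℓ : ℤ) : K)‖ ≤ 1 := norm_intCast_le_one K _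
  calc (1 : ℝ) ≤ ‖(q : K)‖ * ‖((Int.gcdA q ℓ : ℤ) : K)‖ := h1q
    _ ≤ ‖(q : K)‖ * 1 := mul_le_mul_of_nonneg_left ha (norm_nonneg _)
    _ = ‖(q : K)‖ := mul_one _

open IsUltrametricDist Polynomial Finset Matrix in
/-- A root of unity within distance `ℓ^{-c}` of 1 (with `c > 1/(ℓ-1)`) equals 1. -/
lemma aux_root_of_unity (ℓ : ℕ) (hℓprime : ℓ.Prime)
    (K : Type*) [NormedField K] [IsUltrametricDist K]
    (hnorm : ‖(ℓ : K)‖ = (ℓ : ℝ)⁻¹)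
    (c : ℚ) (hc : 1 / ((ℓ : ℚ) - 1) < c)
    (lam : K) (m : ℕ) (hm : 1 ≤ m) (hlam : lam ^ m = 1)
    (hd : ‖lam - 1‖ ≤ (ℓ : ℝ) ^ (-(c : ℝ))) : lam = 1 := by
  set r : ℝ := (ℓ : ℝ) ^ (-(c : ℝ)) with hr
  have hℓ2 : (2 : ℝ) ≤ (ℓ : ℝ) := by exact_mod_cast hℓprime.two_le
  have hℓ1 : (1 : ℝ) < (ℓ : ℝ) := by linarith
  have hc0 : (0 : ℝ) < (c : ℝ) := by
    have h0 : (0 : ℚ) < 1 / ((ℓ : ℚ) - 1) := by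
      apply div_pos one_pos
      have : (2 : ℚ) ≤ (ℓ : ℚ) := by exact_mod_cast hℓprime.two_le
      linarith
    have : (0 : ℚ) < c := lt_trans h0 hc
    exact_mod_cast this
  have hr0 : 0 < r := Real.rpow_pos_of_pos (by linarith) _
  have hr1 : r < 1 := by
    rw [hr]
    have : (ℓ : ℝ) ^ (-(c : ℝ)) < (ℓ : ℝ) ^ (0 : ℝ) :=
      Real.rpow_lt_rpow_left_iff hℓ1 |>.mpr (by linarith)
    simpa using this
  have hrpow : r ^ (ℓ - 1) < (ℓ : ℝ)⁻¹ := by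
    have hcast : ((ℓ - 1 : ℕ) : ℝ) = (ℓ : ℝ) - 1 := by
      have : 1 ≤ ℓ := hℓprime.one_lt.le
      push_cast [this]; ring
    have hq : (1 : ℚ) < c * ((ℓ : ℚ) - 1) := by
      have hpos : (0 : ℚ) < (ℓ : ℚ) - 1 := by
        have : (2 : ℚ) ≤ (ℓ : ℚ) := by exact_mod_cast hℓprime.two_le
        linarith
      rw [div_lt_iff₀ hpos] at hc
      linarith
    have hR : (1 : ℝ) < (c : ℝ) * ((ℓ : ℝ) - 1) := by exact_mod_cast hq
    have heq : r ^ (ℓ - 1) = (ℓ : ℝ) ^ (-(c : ℝ) * ((ℓ : ℝ) - 1)) := by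
      rw [hr, ← Real.rpow_natCast ((ℓ : ℝ) ^ (-(c : ℝ))) (ℓ - 1),
        ← Real.rpow_mul (by linarith), hcast]
    rw [heq, ← Real.rpow_neg_one (ℓ : ℝ)]
    exact Real.rpow_lt_rpow_left_iff hℓ1 |>.mpr (by nlinarith)
  by_contra hne
  have hfin : IsOfFinOrder lam := isOfFinOrder_iff_pow_eq_one.mpr ⟨m, hm, hlam⟩
  obtain ⟨d, hdd⟩ : ∃ d, d = orderOf lam := ⟨_, rfl⟩
  have hd1 : d ≠ 1 := fun h => hne (orderOf_eq_one_iff.mp (hdd ▸ h))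
  have hd0 : 0 < d := hdd ▸ hfin.orderOf_pos
  obtain ⟨q, hqq⟩ : ∃ q, q = d.minFac := ⟨_, rfl⟩
  have hqprime : q.Prime := hqq ▸ Nat.minFac_prime hd1
  have hqdvd : q ∣ d := hqq ▸ Nat.minFac_dvd d
  obtain ⟨s, hss⟩ : ∃ s, s = d / q := ⟨_, rfl⟩
  have hsq : s * q = d := hss ▸ Nat.div_mul_cancel hqdvd
  have hs0 : 0 < s := hss ▸ Nat.div_pos (Nat.le_of_dvd hd0 hqdvd) hqprime.pos
  have hsd : s < d := by
    have hq2 : 2 ≤ q := hqprime.two_le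
    nlinarith [hsq, hs0]
  set ζ := lam ^ s with hζ
  have hζq : ζ ^ q = 1 := by
    rw [hζ, ← pow_mul, hsq, hdd, pow_orderOf_eq_one]
  have hζne : ζ ≠ 1 := by
    intro h
    have hdvd : orderOf lam ∣ s := orderOf_dvd_of_pow_eq_one (by rw [← hζ, h])
    rw [← hdd] at hdvd
    exact absurd (Nat.le_of_dvd hs0 hdvd) (by omega)
  have hlamnorm : ‖lam‖ ≤ 1 := by
    have h := IsUltrametricDist.norm_add_le_max (lam - 1) 1
    simp only [sub_add_cancel, norm_one] at h
    exact h.trans (max_le (hd.trans hr1.le) le_rfl)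
  have hεle : ‖ζ - 1‖ ≤ r := by
    have hgeom : (∑ i ∈ range s, lam ^ i) * (lam - 1) = lam ^ s - 1 := geom_sum_mul lam s
    have hsum : ‖∑ i ∈ range s, lam ^ i‖ ≤ 1 := by
      apply norm_sum_le_of_forall_le_of_nonneg zero_le_one
      intro i _
      calc ‖lam ^ i‖ = ‖lam‖ ^ i := norm_pow _ _
        _ ≤ 1 ^ i := pow_le_pow_left₀ (norm_nonneg _) hlamnorm i
        _ = 1 := one_pow _
    calc ‖ζ - 1‖ = ‖∑ i ∈ range s, lam ^ i‖ * ‖lam - 1‖ := by rw [← norm_mul, hgeom, hζ]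
      _ ≤ 1 * r := mul_le_mul hsum hd (norm_nonneg _) zero_le_one
      _ = r := one_mul _
  set ε := ζ - 1 with hε
  have hεne : ε ≠ 0 := sub_ne_zero_of_ne hζne
  have hεpos : 0 < ‖ε‖ := norm_pos_iff.mpr hεne
  have hεone : ‖ε‖ ≤ 1 := hεle.trans hr1.le
  obtain ⟨t, rfl⟩ : ∃ t, q = t + 2 := ⟨q - 2, by have := hqprime.two_le; omega⟩
  have hbin : (ε + 1) ^ (t + 2) = ∑ k ∈ range (t + 3), ε ^ k * ((t + 2).choose k : K) := by
    have h := add_pow ε (1 : K) (t + 2)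
    simpa using h
  have hζε : (ε + 1) ^ (t + 2) = 1 := by rw [hε, sub_add_cancel]; exact hζq
  have hsum0 : ∑ k ∈ range (t + 3), ε ^ k * ((t + 2).choose k : K) = 1 := by
    rw [← hbin, hζε]
  have hpeel : ∑ k ∈ range (t + 3), ε ^ k * ((t + 2).choose k : K)
      = (∑ k ∈ range (t + 1), ε ^ (k + 2) * ((t + 2).choose (k + 2) : K))
        + ε * (((t : K) + 2)) + 1 := by
    rw [Finset.sum_range_succ' (fun k => ε ^ k * ((t + 2).choose k : K)) (t + 2),
      Finset.sum_range_succ' (fun k => ε ^ (k + 1) * ((t + 2).choose (k + 1) : K)) (t + 1)]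
    have h1 : ((t + 2).choose 1 : K) = (t : K) + 2 := by
      rw [Nat.choose_one_right]; push_cast; ring
    have h0 : ((t + 2).choose 0 : K) = 1 := by simp
    rw [h1, h0]
    ring
  have hkey : ε * (((t + 2 : ℕ) : K))
      = -∑ k ∈ range (t + 1), ε ^ (k + 2) * ((t + 2).choose (k + 2) : K) := by
    rw [hpeel] at hsum0
    push_cast
    linear_combination hsum0
  have hnormeq : ‖ε‖ * ‖((t + 2 : ℕ) : K)‖
      = ‖∑ k ∈ range (t + 1), ε ^ (k + 2) * ((t + 2).choose (k + 2) : K)‖ := by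
    rw [← norm_mul, hkey, norm_neg]
  by_cases hcase : t + 2 = ℓ
  · -- q = ℓ
    set M : ℝ := max ((ℓ : ℝ)⁻¹ * r) (r ^ (ℓ - 1)) with hM
    have hM0 : 0 ≤ M := le_max_of_le_right (pow_nonneg hr0.le _)
    have hbound : ‖∑ k ∈ range (t + 1), ε ^ (k + 2) * ((t + 2).choose (k + 2) : K)‖
        ≤ ‖ε‖ * M := by
      apply norm_sum_le_of_forall_le_of_nonneg (mul_nonneg (norm_nonneg _) hM0)
      intro k hk
      have hk1 : k < t + 1 := Finset.mem_range.mp hk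
      rw [norm_mul, norm_pow]
      by_cases hkt : k + 2 = ℓ
      · have hkeq : k + 2 = t + 2 := by omega
        have hch : ((t + 2).choose (k + 2) : K) = 1 := by
          rw [hkeq, Nat.choose_self]; norm_num
        rw [hch, norm_one, mul_one]
        have h1 : k + 2 = (ℓ - 1) + 1 := by omega
        have h2 : ‖ε‖ ^ (ℓ - 1) ≤ r ^ (ℓ - 1) := pow_le_pow_left₀ (norm_nonneg _) hεle _
        calc ‖ε‖ ^ (k + 2) = ‖ε‖ * ‖ε‖ ^ (ℓ - 1) := by rw [h1, pow_succ']
          _ ≤ ‖ε‖ * r ^ (ℓ - 1) := mul_le_mul_of_nonneg_left h2 (norm_nonneg _)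
          _ ≤ ‖ε‖ * M := mul_le_mul_of_nonneg_left (le_max_right _ _) (norm_nonneg _)
      · have hlt : k + 2 < ℓ := by omega
        have hdvd : ℓ ∣ (t + 2).choose (k + 2) := by
          rw [hcase] at *
          exact Nat.Prime.dvd_choose_self hℓprime (by omega) hlt
        obtain ⟨j, hj⟩ := hdvd
        have hC : ‖((t + 2).choose (k + 2) : K)‖ ≤ (ℓ : ℝ)⁻¹ := by
          rw [hj]
          push_cast
          rw [norm_mul, hnorm]
          calc (ℓ : ℝ)⁻¹ * ‖(j : K)‖ ≤ (ℓ : ℝ)⁻¹ * 1 := by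
                exact mul_le_mul_of_nonneg_left (norm_natCast_le_one K j)
                  (by positivity)
            _ = (ℓ : ℝ)⁻¹ := mul_one _
        have hpow : ‖ε‖ ^ (k + 2) ≤ ‖ε‖ * r := by
          calc ‖ε‖ ^ (k + 2) ≤ ‖ε‖ ^ 2 := pow_le_pow_of_le_one (norm_nonneg _) hεone (by omega)
            _ = ‖ε‖ * ‖ε‖ := sq ‖ε‖
            _ ≤ ‖ε‖ * r := mul_le_mul_of_nonneg_left hεle (norm_nonneg _)
        calc ‖ε‖ ^ (k + 2) * ‖((t + 2).choose (k + 2) : K)‖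
            ≤ (‖ε‖ * r) * (ℓ : ℝ)⁻¹ := by
              apply mul_le_mul hpow hC (norm_nonneg _)
              positivity
          _ = ‖ε‖ * ((ℓ : ℝ)⁻¹ * r) := by ring
          _ ≤ ‖ε‖ * M := mul_le_mul_of_nonneg_left (le_max_left _ _) (norm_nonneg _)
    have hℓK : ‖((t + 2 : ℕ) : K)‖ = (ℓ : ℝ)⁻¹ := by rw [hcase]; exact hnorm
    rw [hℓK] at hnormeq
    have hle : ‖ε‖ * (ℓ : ℝ)⁻¹ ≤ ‖ε‖ * M := hnormeq ▸ hbound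
    have : (ℓ : ℝ)⁻¹ ≤ M := le_of_mul_le_mul_left hle hεpos
    have h1 : (ℓ : ℝ)⁻¹ * r < (ℓ : ℝ)⁻¹ := by
      have : (0:ℝ) < (ℓ : ℝ)⁻¹ := by positivity
      nlinarith
    rcases max_cases ((ℓ : ℝ)⁻¹ * r) (r ^ (ℓ - 1)) with ⟨hmm, _⟩ | ⟨hmm, _⟩ <;>
      rw [hM, hmm] at this <;> linarith
  · -- q ≠ ℓ
    have hq1 : 1 ≤ ‖((t + 2 : ℕ) : K)‖ :=
      aux_norm_prime_ge ℓ hℓprime K hnorm (t + 2) hqprime hcase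
    have hbound : ‖∑ k ∈ range (t + 1), ε ^ (k + 2) * ((t + 2).choose (k + 2) : K)‖
        ≤ ‖ε‖ * r := by
      apply norm_sum_le_of_forall_le_of_nonneg (mul_nonneg (norm_nonneg _) hr0.le)
      intro k _
      rw [norm_mul, norm_pow]
      have hpow : ‖ε‖ ^ (k + 2) ≤ ‖ε‖ * r := by
        calc ‖ε‖ ^ (k + 2) ≤ ‖ε‖ ^ 2 := pow_le_pow_of_le_one (norm_nonneg _) hεone (by omega)
          _ = ‖ε‖ * ‖ε‖ := sq ‖ε‖
          _ ≤ ‖ε‖ * r := mul_le_mul_of_nonneg_left hεle (norm_nonneg _)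
      calc ‖ε‖ ^ (k + 2) * ‖((t + 2).choose (k + 2) : K)‖
          ≤ (‖ε‖ * r) * 1 := mul_le_mul hpow (norm_natCast_le_one K _) (norm_nonneg _)
            (by positivity)
        _ = ‖ε‖ * r := mul_one _
    have hge : ‖ε‖ * 1 ≤ ‖ε‖ * ‖((t + 2 : ℕ) : K)‖ :=
      mul_le_mul_of_nonneg_left hq1 (norm_nonneg _)
    rw [hnormeq] at hge
    have : ‖ε‖ * 1 ≤ ‖ε‖ * r := hge.trans hbound
    have : (1 : ℝ) ≤ r := le_of_mul_le_mul_left this hεpos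
    linarith

open IsUltrametricDist Polynomial Finset Matrix in
/-- Let `ℓ` be a prime, `K` an algebraically closed normed field with
nonarchimedean norm satisfying `‖(ℓ : K)‖ = (ℓ : ℝ)⁻¹`. Let `n ≥ 1`, and let `c` be a
rational number with `c > 1/(ℓ-1)`. If `U` is an `n × n` matrix over `K` all of whose
entries of `U - 1` have norm at most `ℓ^{-c}`, and `U` is quasi-unipotent, then `U` is
unipotent. -/
theorem stmt0 (ℓ : ℕ) (hℓprime : ℓ.Prime)
    (K : Type*) [NormedField K] [IsAlgClosed K]
    (hna : IsNonarchimedean (fun x : K => ‖x‖))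
    (hnorm : ‖(ℓ : K)‖ = (ℓ : ℝ)⁻¹)
    (n : ℕ) (hn : 1 ≤ n)
    (c : ℚ) (hc : 1 / ((ℓ : ℚ) - 1) < c)
    (U : Matrix (Fin n) (Fin n) K)
    (hU : ∀ i j, ‖(U - 1) i j‖ ≤ (ℓ : ℝ) ^ (-(c : ℝ)))
    (hqu : ∃ m : ℕ, 1 ≤ m ∧ IsNilpotent (U ^ m - 1)) :
    IsNilpotent (U - 1) := by
  classical
  haveI : IsUltrametricDist K :=
    IsUltrametricDist.isUltrametricDist_of_isNonarchimedean_norm hna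
  set r : ℝ := (ℓ : ℝ) ^ (-(c : ℝ)) with hr
  have hr0 : 0 ≤ r := (Real.rpow_pos_of_pos (by exact_mod_cast hℓprime.pos) _).le
  set A : Matrix (Fin n) (Fin n) K := U - 1 with hA
  obtain ⟨m, hm, N, hN⟩ := hqu
  -- every root of the characteristic polynomial of A is zero
  have hclaim : ∀ μ : K, A.charpoly.IsRoot μ → μ = 0 := by
    intro μ hroot
    have hdet : (μ • (1 : Matrix (Fin n) (Fin n) K) - A).det = 0 := by
      have h1 : Polynomial.eval μ A.charpoly
          = ((charmatrix A).map (Polynomial.eval μ)).det := by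
        rw [Matrix.charpoly, ← Polynomial.coe_evalRingHom, RingHom.map_det]
        rfl
      have h2 : (charmatrix A).map (Polynomial.eval μ)
          = μ • (1 : Matrix (Fin n) (Fin n) K) - A := by
        ext i j
        by_cases h : i = j
        · subst h
          simp [charmatrix_apply_eq, Matrix.map_apply, Matrix.one_apply]
        · simp [charmatrix_apply_ne _ _ _ h, Matrix.map_apply, Matrix.one_apply_ne h,
            Matrix.smul_apply]
      rw [← h2, ← h1]
      exact hroot
    obtain ⟨v, hv0, hvec⟩ := (Matrix.exists_mulVec_eq_zero_iff).mpr hdet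
    have hAv : A *ᵥ v = μ • v := by
      have h3 : μ • v - A *ᵥ v = 0 := by
        have := hvec
        rwa [Matrix.sub_mulVec, Matrix.smul_mulVec, Matrix.one_mulVec] at this
      have := sub_eq_zero.mp h3
      exact this.symm
    obtain ⟨j0, hj0⟩ : ∃ j, v j ≠ 0 := Function.ne_iff.mp hv0
    obtain ⟨i, -, hi⟩ := Finset.exists_max_image Finset.univ (fun i => ‖v i‖)
      ⟨j0, Finset.mem_univ _⟩
    have hvi : 0 < ‖v i‖ := lt_of_lt_of_le (norm_pos_iff.mpr hj0) (hi j0 (Finset.mem_univ _))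
    -- ‖μ‖ ≤ r
    have hμr : ‖μ‖ ≤ r := by
      have h1 : μ * v i = ∑ j, A i j * v j := by
        have := congrFun hAv i
        simp only [Matrix.mulVec, dotProduct, Pi.smul_apply, smul_eq_mul] at this
        exact this.symm
      have h2 : ‖∑ j, A i j * v j‖ ≤ r * ‖v i‖ := by
        apply norm_sum_le_of_forall_le_of_nonneg (mul_nonneg hr0 (norm_nonneg _))
        intro j _
        rw [norm_mul]
        exact mul_le_mul (hU i j) (hi j (Finset.mem_univ _)) (norm_nonneg _) hr0
      have h3 : ‖μ‖ * ‖v i‖ ≤ r * ‖v i‖ := by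
        rw [← norm_mul, h1]; exact h2
      exact le_of_mul_le_mul_right h3 hvi
    -- (1 + μ) is an m-th root of unity
    have hUv : U *ᵥ v = (1 + μ) • v := by
      have hU' : U = A + 1 := by rw [hA, sub_add_cancel]
      rw [hU', Matrix.add_mulVec, Matrix.one_mulVec, hAv, add_smul, one_smul, add_comm]
    have hpow : ∀ k : ℕ, (U ^ k) *ᵥ v = ((1 + μ) ^ k) • v := by
      intro k
      induction k with
      | zero => simp
      | succ k ih =>
        rw [pow_succ', ← Matrix.mulVec_mulVec, ih, Matrix.mulVec_smul, hUv, smul_smul,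
          ← pow_succ]
    have hBv : (U ^ m - 1) *ᵥ v = ((1 + μ) ^ m - 1) • v := by
      rw [Matrix.sub_mulVec, Matrix.one_mulVec, hpow m, sub_smul, one_smul]
    have hBpow : ∀ k : ℕ, ((U ^ m - 1) ^ k) *ᵥ v = (((1 + μ) ^ m - 1) ^ k) • v := by
      intro k
      induction k with
      | zero => simp
      | succ k ih =>
        rw [pow_succ', ← Matrix.mulVec_mulVec, ih, Matrix.mulVec_smul, hBv, smul_smul,
          ← pow_succ]
    have h0 : (((1 + μ) ^ m - 1) ^ N) * v j0 = 0 := by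
      have := congrFun (hBpow N) j0
      rw [hN] at this
      simpa using this.symm
    have h1 : (((1 + μ) ^ m - 1) ^ N) = 0 := by
      rcases mul_eq_zero.mp h0 with h | h
      · exact h
      · exact absurd h hj0
    have h2 : (1 + μ) ^ m - 1 = 0 := (pow_eq_zero_iff'.mp h1).1
    have hlam : (1 + μ) ^ m = 1 := by rwa [sub_eq_zero] at h2
    have hdist : ‖(1 + μ) - 1‖ ≤ (ℓ : ℝ) ^ (-(c : ℝ)) := by
      simpa using hμr
    have := aux_root_of_unity ℓ hℓprime K hnorm c hc (1 + μ) m hm hlam hdist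
    exact add_eq_left.mp this
  -- conclude: charpoly A = X ^ n, so A ^ n = 0
  have hmonic : A.charpoly.Monic := A.charpoly_monic
  have hdeg : A.charpoly.natDegree = n := by
    rw [Matrix.charpoly_natDegree_eq_dim, Fintype.card_fin]
  have hsplits : Splits A.charpoly := IsAlgClosed.splits _
  have hroots_card : A.charpoly.roots.card = n := by
    exact (Polynomial.splits_iff_card_roots.mp hsplits).trans hdeg
  have hroots : A.charpoly.roots = Multiset.replicate n 0 := by
    apply Multiset.eq_replicate.mpr
    refine ⟨hroots_card, fun b hb => hclaim b (Polynomial.isRoot_of_mem_roots hb)⟩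
  have hp : A.charpoly = X ^ n := by
    have h := hsplits.eq_prod_roots_of_monic hmonic
    rw [hroots] at h
    simpa [Multiset.map_replicate, Multiset.prod_replicate] using h
  refine ⟨n, ?_⟩
  have h := A.aeval_self_charpoly
  rw [hp] at h
  simpa using h
end

section
/- Let k be a field of characteristic 0, n an integer, M an n × n matrix over k, and c ∈ k an element that is not a root of unity (i.e. c^m ≠ 1 for every integer m ≥ 1). If M is similar to c • M, that is, there exists g ∈ GLₙ(k) with g M g⁻¹ = c • M, then M is nilpotent. -/
open Polynomial Matrix

/-- Let `k` be a field of characteristic `0`, `M` an `n × n` matrix over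
`k`, and `c ∈ k` not a root of unity. If `M` is similar to `c • M` (via some
`g ∈ GLₙ(k)`), then `M` is nilpotent. -/
theorem stmt1 (k : Type*) [Field k] [CharZero k]
    (n : ℕ) (M : Matrix (Fin n) (Fin n) k)
    (c : k) (hc : ∀ m : ℕ, 1 ≤ m → c ^ m ≠ 1)
    (g : GL (Fin n) k)
    (hsim : (g : Matrix (Fin n) (Fin n) k) * M * (↑g⁻¹ : Matrix (Fin n) (Fin n) k) = c • M) :
    IsNilpotent M := by
  have h2 : (↑g⁻¹ : Matrix (Fin n) (Fin n) k) * (g : Matrix (Fin n) (Fin n) k) = 1 := by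
    rw [← Units.val_mul, inv_mul_cancel, Units.val_one]
  -- dispose of the case `c = 0`
  rcases eq_or_ne c 0 with rfl | hc0
  · have hM : M = 0 := by
      have h1 : (↑g⁻¹ : Matrix (Fin n) (Fin n) k) *
          ((g : Matrix (Fin n) (Fin n) k) * M * (↑g⁻¹ : Matrix (Fin n) (Fin n) k)) *
          (g : Matrix (Fin n) (Fin n) k) = M := by
        calc (↑g⁻¹ : Matrix (Fin n) (Fin n) k) *
              ((g : Matrix (Fin n) (Fin n) k) * M * (↑g⁻¹ : Matrix (Fin n) (Fin n) k)) *
              (g : Matrix (Fin n) (Fin n) k)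
            = ((↑g⁻¹ : Matrix (Fin n) (Fin n) k) * (g : Matrix (Fin n) (Fin n) k)) * M *
              ((↑g⁻¹ : Matrix (Fin n) (Fin n) k) * (g : Matrix (Fin n) (Fin n) k)) := by
              simp only [mul_assoc]
          _ = M := by rw [h2, one_mul, mul_one]
      rw [hsim, zero_smul, mul_zero, zero_mul] at h1
      exact h1.symm
    exact ⟨1, by simp [hM]⟩
  -- similar matrices have the same characteristic polynomial
  have hconj : (c • M).charpoly = M.charpoly := by
    rw [← hsim]
    unfold Matrix.charpoly
    set G : Matrix (Fin n) (Fin n) k[X] :=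
      (RingHom.mapMatrix (C : k →+* k[X])) (g : Matrix (Fin n) (Fin n) k) with hG
    set Gi : Matrix (Fin n) (Fin n) k[X] :=
      (RingHom.mapMatrix (C : k →+* k[X])) (↑g⁻¹ : Matrix (Fin n) (Fin n) k) with hGi
    have hGGi : G * Gi = 1 := by
      rw [hG, hGi, ← RingHom.map_mul, ← Units.val_mul, mul_inv_cancel, Units.val_one,
        RingHom.map_one]
    have hcent : G * (Matrix.scalar (Fin n) (X : k[X])) * Gi = Matrix.scalar (Fin n) (X : k[X]) := by
      rw [← Matrix.scalar_commute (X : k[X]) (fun r => Commute.all _ _) G, mul_assoc, hGGi,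
        mul_one]
    have hchm : charmatrix ((g : Matrix (Fin n) (Fin n) k) * M *
        (↑g⁻¹ : Matrix (Fin n) (Fin n) k)) = G * charmatrix M * Gi := by
      simp only [charmatrix]
      rw [mul_sub, sub_mul, hcent]
      rw [RingHom.map_mul, RingHom.map_mul]
    rw [hchm, det_mul, det_mul]
    have h4 : G.det * Gi.det = 1 := by rw [← det_mul, hGGi, det_one]
    calc G.det * (charmatrix M).det * Gi.det
        = (G.det * Gi.det) * (charmatrix M).det := by ring
      _ = (charmatrix M).det := by rw [h4, one_mul]
  -- evaluation of the characteristic polynomial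
  have hev : ∀ (N : Matrix (Fin n) (Fin n) k) (t : k),
      eval t N.charpoly = det (t • (1 : Matrix (Fin n) (Fin n) k) - N) := by
    intro N t
    have h1 : eval t N.charpoly = ((evalRingHom t).mapMatrix (charmatrix N)).det := by
      rw [Matrix.charpoly, ← RingHom.map_det]
      rfl
    rw [h1]
    congr 1
    ext i j
    by_cases h : i = j <;>
      simp [charmatrix_apply, Matrix.diagonal, Matrix.one_apply, h]
  have hdeg : M.charpoly.natDegree = n := by
    rw [Matrix.charpoly_natDegree_eq_dim, Fintype.card_fin]
  -- the key functional equation and scaleRoots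
  have hscale : M.charpoly.scaleRoots c = M.charpoly := by
    apply Polynomial.funext
    intro t
    have h1 : eval t (M.charpoly.scaleRoots c) = c ^ n * eval (c⁻¹ * t) M.charpoly := by
      have h2 := scaleRoots_eval₂_mul (RingHom.id k) (c⁻¹ * t) c (p := M.charpoly)
      simp only [RingHom.id_apply] at h2
      rw [← mul_assoc, mul_inv_cancel₀ hc0, one_mul] at h2
      rw [hdeg] at h2
      exact h2
    have h3 : t • (1 : Matrix (Fin n) (Fin n) k) - c • M =
        c • ((c⁻¹ * t) • (1 : Matrix (Fin n) (Fin n) k) - M) := by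
      rw [smul_sub, smul_smul, ← mul_assoc, mul_inv_cancel₀ hc0, one_mul]
    have h4 : eval t M.charpoly = c ^ n * eval (c⁻¹ * t) M.charpoly := by
      conv_lhs => rw [← hconj]
      rw [hev, hev, h3, det_smul, Fintype.card_fin]
    rw [h1, h4]
  -- low coefficients vanish
  have hcoeff : ∀ i, i < n → M.charpoly.coeff i = 0 := by
    intro i hi
    have h1 := congrArg (fun p => Polynomial.coeff p i) hscale
    simp only [coeff_scaleRoots, hdeg] at h1
    have h3 : M.charpoly.coeff i * (c ^ (n - i) - 1) = 0 := by
      rw [mul_sub, h1, mul_one, sub_self]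
    rcases mul_eq_zero.mp h3 with h | h
    · exact h
    · exact absurd (sub_eq_zero.mp h) (hc (n - i) (by omega))
  -- the characteristic polynomial is X ^ n
  have hXn : M.charpoly = X ^ n := by
    ext i
    rcases lt_trichotomy i n with h | h | h
    · rw [hcoeff i h, coeff_X_pow, if_neg h.ne]
    · have h5 : i = M.charpoly.natDegree := by rw [hdeg]; exact h
      rw [coeff_X_pow, if_pos h, h5]
      exact M.charpoly_monic.coeff_natDegree
    · rw [coeff_X_pow, if_neg h.ne', Polynomial.coeff_eq_zero_of_natDegree_lt (by omega)]
  exact ⟨n, by have := M.aeval_self_charpoly; rwa [hXn, map_pow, aeval_X] at this⟩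
end

section
/- Let ℓ be a prime number and let Π be a topological space. If ζ ∈ K is a root of unity (i.e. ζ^m = 1 for some integer m ≥ 1) and ‖ζ − 1‖ ≤ ℓ^{−c} for some rational number c > 1/(ℓ−1) (where ℓ^{−c} is the real number (ℓ:ℝ) raised to the power −c), then ζ = 1. -/
section aux
variable {K : Type*} [NormedField K]

/-- nonarchimedean bound on finite sums -/
lemma na_sum_le (hna : IsNonarchimedean (fun x : K => ‖x‖)) {ι : Type*} (s : Finset ι) (f : ι → K) {r : ℝ} (hr : 0 ≤ r)
    (h : ∀ i ∈ s, ‖f i‖ ≤ r) : ‖∑ i ∈ s, f i‖ ≤ r := by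
  classical
  induction s using Finset.cons_induction with
  | empty => simpa using hr
  | cons a s ha ih =>
      rw [Finset.sum_cons]
      refine le_trans (hna _ _) (max_le (h a (Finset.mem_cons_self a s)) ?_)
      exact ih fun i hi => h i (Finset.mem_cons_of_mem hi)

lemma na_natCast_le_one (hna : IsNonarchimedean (fun x : K => ‖x‖)) (n : ℕ) : ‖(n : K)‖ ≤ 1 := by
  induction n with
  | zero => simp
  | succ k ih =>
      push_cast
      exact le_trans (hna _ _) (max_le ih (by simp))

lemma na_intCast_le_one (hna : IsNonarchimedean (fun x : K => ‖x‖)) (n : ℤ) : ‖(n : K)‖ ≤ 1 := by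
  induction n using Int.induction_on with
  | zero => simp
  | succ k _ => have := na_natCast_le_one hna (K := K) (k + 1); push_cast at this ⊢; exact this
  | pred k _ =>
      have := na_natCast_le_one hna (K := K) (k + 1)
      rw [show ((-(k:ℤ) - 1 : ℤ) : K) = -((k+1 : ℕ) : K) by push_cast; ring, norm_neg]
      exact this

end aux

lemma na_pow_sub_one_le {K : Type*} [NormedField K]
    (hna : IsNonarchimedean (fun x : K => ‖x‖))
    {ζ : K} (hζ : ‖ζ‖ ≤ 1) (a : ℕ) : ‖ζ ^ a - 1‖ ≤ ‖ζ - 1‖ := by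
  rw [← geom_sum_mul ζ a, norm_mul]
  have h1 : ‖∑ i ∈ Finset.range a, ζ ^ i‖ ≤ 1 :=
    na_sum_le hna _ _ zero_le_one fun i _ => by
      simpa [norm_pow] using pow_le_one₀ (norm_nonneg ζ) hζ
  exact mul_le_of_le_one_left (norm_nonneg _) h1

lemma coprime_kill {K : Type*} [NormedField K]
    (hna : IsNonarchimedean (fun x : K => ‖x‖))
    {ℓ : ℕ} (hp : ℓ.Prime) (hnorm : ‖(ℓ : K)‖ = (ℓ : ℝ)⁻¹)
    {η : K} {n : ℕ} (hn : ¬ ℓ ∣ n) (hηn : η ^ n = 1)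
    (hsm : ‖η - 1‖ < 1) : η = 1 := by
  by_contra hne
  have hn0 : n ≠ 0 := fun h => hn (h ▸ dvd_zero ℓ)
  have hη1 : ‖η‖ ≤ 1 := by
    by_contra h
    push_neg at h
    have h2 := one_lt_pow₀ h hn0
    rw [← norm_pow, hηn, norm_one] at h2
    exact lt_irrefl 1 h2
  -- the geometric sum vanishes
  have hsum : ∑ i ∈ Finset.range n, η ^ i = 0 := by
    have h := geom_sum_mul η n
    rw [hηn, sub_self] at h
    rcases mul_eq_zero.mp h with h' | h'
    · exact h'
    · exact absurd (sub_eq_zero.mp h') hne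
  -- hence ‖(n : K)‖ < 1
  have hnK : ‖(n : K)‖ < 1 := by
    have heq : (n : K) = ∑ i ∈ Finset.range n, ((1 : K) - η ^ i) := by
      rw [Finset.sum_sub_distrib, hsum, sub_zero, Finset.sum_const,
        Finset.card_range, nsmul_eq_mul, mul_one]
    calc ‖(n : K)‖ ≤ ‖η - 1‖ := by
          rw [heq]
          exact na_sum_le hna _ _ (norm_nonneg _) fun i _ => by
            rw [norm_sub_rev]; exact na_pow_sub_one_le hna hη1 i
      _ < 1 := hsm
  -- Bezout contradiction
  have hco : Nat.Coprime ℓ n := (Nat.Prime.coprime_iff_not_dvd hp).mpr hn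
  have hbez : (1 : ℤ) = ℓ * Nat.gcdA ℓ n + n * Nat.gcdB ℓ n := by
    have := Nat.gcd_eq_gcd_ab ℓ n
    rwa [hco, Nat.cast_one] at this
  have hK : (1 : K) = (ℓ : K) * ((Nat.gcdA ℓ n : ℤ) : K) + (n : K) * ((Nat.gcdB ℓ n : ℤ) : K) := by
    have := congrArg (fun z : ℤ => ((z : K))) hbez
    push_cast at this
    simpa using this
  have hℓinv : ‖(ℓ : K)‖ < 1 := by
    rw [hnorm]
    rw [inv_lt_one_iff₀]
    right
    exact_mod_cast hp.one_lt
  have : (1 : ℝ) < 1 := by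
    calc (1 : ℝ) = ‖(1 : K)‖ := norm_one.symm
      _ ≤ max (‖(ℓ : K)‖ * ‖((Nat.gcdA ℓ n : ℤ) : K)‖) (‖(n : K)‖ * ‖((Nat.gcdB ℓ n : ℤ) : K)‖) := by
          rw [hK]
          exact le_trans (hna _ _) (by simp [norm_mul])
      _ < 1 := by
          apply max_lt
          · exact mul_lt_one_of_nonneg_of_lt_one_left (norm_nonneg _)
              hℓinv (na_intCast_le_one hna _) |>.trans_le le_rfl
          · exact mul_lt_one_of_nonneg_of_lt_one_left (norm_nonneg _)
              hnK (na_intCast_le_one hna _) |>.trans_le le_rfl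
  exact lt_irrefl 1 this


lemma ell_kill {K : Type*} [NormedField K]
    (hna : IsNonarchimedean (fun x : K => ‖x‖))
    {ℓ : ℕ} (hp : ℓ.Prime) (hnorm : ‖(ℓ : K)‖ = (ℓ : ℝ)⁻¹)
    {η : K} (hη : η ^ ℓ = 1) (h1 : ‖η - 1‖ < 1)
    (h2 : ‖η - 1‖ ^ (ℓ - 1) < (ℓ : ℝ)⁻¹) : η = 1 := by
  by_contra hne
  set t : K := η - 1 with ht
  have ht0 : t ≠ 0 := sub_ne_zero.mpr hne
  have hℓ2 : 2 ≤ ℓ := hp.two_le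
  -- expand (t+1)^ℓ = 1
  have hexp : (1 : K) = ∑ k ∈ Finset.range (ℓ + 1), t ^ k * ((ℓ.choose k : ℕ) : K) := by
    have h : (t + 1) ^ ℓ = 1 := by rw [ht, sub_add_cancel, hη]
    rw [← h, add_pow]
    simp
  -- peel off k = 0 term
  have hpeel : ∑ k ∈ Finset.range ℓ, t ^ (k + 1) * ((ℓ.choose (k + 1) : ℕ) : K) = 0 := by
    have h := hexp
    rw [Finset.sum_range_succ'] at h
    simp only [pow_zero, Nat.choose_zero_right, Nat.cast_one, one_mul, mul_one] at h
    linear_combination -h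
  -- divide by t
  have hS : ∑ k ∈ Finset.range ℓ, t ^ k * ((ℓ.choose (k + 1) : ℕ) : K) = 0 := by
    have hfac : t * ∑ k ∈ Finset.range ℓ, t ^ k * ((ℓ.choose (k + 1) : ℕ) : K)
        = ∑ k ∈ Finset.range ℓ, t ^ (k + 1) * ((ℓ.choose (k + 1) : ℕ) : K) := by
      rw [Finset.mul_sum]
      exact Finset.sum_congr rfl fun k _ => by ring
    rcases mul_eq_zero.mp (hfac.trans hpeel) with h | h
    · exact absurd h ht0
    · exact h
  -- peel off k = 0 term again: it is (ℓ : K)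
  obtain ⟨l', rfl⟩ : ∃ l', ℓ = l' + 1 := ⟨ℓ - 1, by omega⟩
  have hS2 : (((l' + 1 : ℕ) : K))
      = - ∑ k ∈ Finset.range l', t ^ (k + 1) * (((l' + 1).choose (k + 1 + 1) : ℕ) : K) := by
    have h := hS
    rw [Finset.sum_range_succ'] at h
    simp only [pow_zero, zero_add, Nat.choose_one_right, one_mul] at h
    linear_combination h
  -- norm estimate
  have ht1 : ‖t‖ ≤ 1 := le_of_lt h1
  have hinvpos : (0 : ℝ) < (((l' + 1 : ℕ) : ℝ))⁻¹ := by positivity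
  have hbound : ‖((l' + 1 : ℕ) : K)‖ ≤ max (‖t‖ * (((l' + 1 : ℕ) : ℝ))⁻¹) (‖t‖ ^ l') := by
    rw [hS2, norm_neg]
    apply na_sum_le hna _ _ (le_max_of_le_right (by positivity))
    intro k hk
    rw [Finset.mem_range] at hk
    rw [norm_mul, norm_pow]
    rcases eq_or_ne (k + 1) l' with heq | hlt
    · -- k + 2 = l' + 1, choose = 1
      apply le_max_of_le_right
      have hch : (l' + 1).choose (k + 1 + 1) = 1 := by
        rw [show k + 1 + 1 = l' + 1 by omega]; exact Nat.choose_self _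
      rw [hch, ← heq]
      simp
    · -- k + 2 ≤ l', so ℓ divides the binomial coefficient
      apply le_max_of_le_left
      have hdvd : (l' + 1) ∣ (l' + 1).choose (k + 1 + 1) :=
        hp.dvd_choose_self (by omega) (by omega)
      obtain ⟨d, hd⟩ := hdvd
      have hnrm : ‖(((l' + 1).choose (k + 1 + 1) : ℕ) : K)‖ ≤ (((l' + 1 : ℕ) : ℝ))⁻¹ := by
        rw [hd, Nat.cast_mul, norm_mul]
        calc ‖((l' + 1 : ℕ) : K)‖ * ‖((d : ℕ) : K)‖ ≤ ‖((l' + 1 : ℕ) : K)‖ * 1 :=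
              mul_le_mul_of_nonneg_left (na_natCast_le_one hna d) (norm_nonneg _)
          _ = (((l' + 1 : ℕ) : ℝ))⁻¹ := by rw [mul_one, hnorm]
      calc ‖t‖ ^ (k + 1) * ‖(((l' + 1).choose (k + 1 + 1) : ℕ) : K)‖
          ≤ ‖t‖ ^ 1 * (((l' + 1 : ℕ) : ℝ))⁻¹ :=
            mul_le_mul (pow_le_pow_of_le_one (norm_nonneg t) ht1 (by omega)) hnrm
              (norm_nonneg _) (by positivity)
        _ = ‖t‖ * (((l' + 1 : ℕ) : ℝ))⁻¹ := by rw [pow_one]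
  -- contradiction
  have hlhs : (((l' + 1 : ℕ) : ℝ))⁻¹ ≤ max (‖t‖ * (((l' + 1 : ℕ) : ℝ))⁻¹) (‖t‖ ^ l') := by
    exact hnorm ▸ hbound
  have hmax : max (‖t‖ * (((l' + 1 : ℕ) : ℝ))⁻¹) (‖t‖ ^ l') < (((l' + 1 : ℕ) : ℝ))⁻¹ := by
    apply max_lt
    · calc ‖t‖ * (((l' + 1 : ℕ) : ℝ))⁻¹ < 1 * (((l' + 1 : ℕ) : ℝ))⁻¹ :=
            mul_lt_mul_of_pos_right h1 hinvpos
        _ = _ := one_mul _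
    · simpa using h2
  exact absurd hlhs (not_le.mpr hmax)

lemma norm_le_one_of_pow_eq_one {K : Type*} [NormedField K]
    {η : K} {n : ℕ} (hn : n ≠ 0) (h : η ^ n = 1) : ‖η‖ ≤ 1 := by
  by_contra hgt
  push_neg at hgt
  have h2 := one_lt_pow₀ hgt hn
  rw [← norm_pow, h, norm_one] at h2
  exact lt_irrefl 1 h2

/-- Let `ℓ` be a prime and `K` a normed field with nonarchimedean norm
satisfying `‖(ℓ : K)‖ = (ℓ : ℝ)⁻¹`. If `ζ ∈ K` is a root of unity with
`‖ζ - 1‖ ≤ ℓ^{-c}` for some rational `c > 1/(ℓ-1)`, then `ζ = 1`. -/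
theorem stmt2 (ℓ : ℕ) (hℓprime : ℓ.Prime)
    (K : Type*) [NormedField K]
    (hna : IsNonarchimedean (fun x : K => ‖x‖))
    (hnorm : ‖(ℓ : K)‖ = (ℓ : ℝ)⁻¹)
    (ζ : K) (hζ : ∃ m : ℕ, 1 ≤ m ∧ ζ ^ m = 1)
    (c : ℚ) (hc : 1 / ((ℓ : ℚ) - 1) < c)
    (hnear : ‖ζ - 1‖ ≤ (ℓ : ℝ) ^ (-(c : ℝ))) :
    ζ = 1 := by
  obtain ⟨m, hm1, hm⟩ := hζ
  have hℓ2 : 2 ≤ ℓ := hℓprime.two_le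
  have hl1 : (1 : ℝ) < (ℓ : ℝ) := by exact_mod_cast hℓprime.one_lt
  have hlq : (0 : ℚ) < (ℓ : ℚ) - 1 := by
    have : (2 : ℚ) ≤ (ℓ : ℚ) := by exact_mod_cast hℓ2
    linarith
  have hcq : 1 < c * ((ℓ : ℚ) - 1) := by
    rw [div_lt_iff₀ hlq] at hc
    exact hc
  have hcpos : (0 : ℝ) < (c : ℝ) := by
    have h0 : (0 : ℚ) < 1 / ((ℓ : ℚ) - 1) := by positivity
    exact_mod_cast h0.trans hc
  have hbd1 : (ℓ : ℝ) ^ (-(c : ℝ)) < 1 :=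
    Real.rpow_lt_one_of_one_lt_of_neg hl1 (by linarith)
  have hsmall : ‖ζ - 1‖ < 1 := lt_of_le_of_lt hnear hbd1
  -- key estimate for ell_kill
  have hest : ∀ r : ℝ, 0 ≤ r → r ≤ (ℓ : ℝ) ^ (-(c : ℝ)) → r ^ (ℓ - 1) < (ℓ : ℝ)⁻¹ := by
    intro r hr0 hr
    have h1 : r ^ (ℓ - 1) ≤ ((ℓ : ℝ) ^ (-(c : ℝ))) ^ (ℓ - 1) := pow_le_pow_left₀ hr0 hr _
    have h2 : ((ℓ : ℝ) ^ (-(c : ℝ))) ^ (ℓ - 1) = (ℓ : ℝ) ^ (-(c : ℝ) * ((ℓ - 1 : ℕ) : ℝ)) := by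
      rw [← Real.rpow_natCast ((ℓ : ℝ) ^ (-(c : ℝ))) (ℓ - 1), ← Real.rpow_mul (by positivity)]
    have hcast : ((ℓ - 1 : ℕ) : ℝ) = (ℓ : ℝ) - 1 := by
      have : 1 ≤ ℓ := hℓprime.one_le
      push_cast [this]
      ring
    have h3 : -(c : ℝ) * ((ℓ - 1 : ℕ) : ℝ) < -1 := by
      rw [hcast]
      have : (1 : ℝ) < (c : ℝ) * ((ℓ : ℝ) - 1) := by exact_mod_cast hcq
      nlinarith
    calc r ^ (ℓ - 1) ≤ (ℓ : ℝ) ^ (-(c : ℝ) * ((ℓ - 1 : ℕ) : ℝ)) := h2 ▸ h1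
      _ < (ℓ : ℝ) ^ (-1 : ℝ) := Real.rpow_lt_rpow_of_exponent_lt hl1 h3
      _ = (ℓ : ℝ)⁻¹ := Real.rpow_neg_one _
  -- induction: roots of unity of ℓ-power order close to 1 are 1
  have key : ∀ k : ℕ, ∀ ξ : K, ξ ^ ℓ ^ k = 1 → ‖ξ - 1‖ ≤ (ℓ : ℝ) ^ (-(c : ℝ)) → ξ = 1 := by
    intro k
    induction k with
    | zero => intro ξ h _; simpa using h
    | succ k ih =>
        intro ξ h hle
        have hξ1 : ‖ξ‖ ≤ 1 :=
          norm_le_one_of_pow_eq_one (pow_ne_zero _ hℓprime.ne_zero) h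
        have hη : (ξ ^ ℓ ^ k) ^ ℓ = 1 := by rw [← pow_mul, ← pow_succ]; exact h
        have hle' : ‖ξ ^ ℓ ^ k - 1‖ ≤ (ℓ : ℝ) ^ (-(c : ℝ)) :=
          (na_pow_sub_one_le hna hξ1 _).trans hle
        have hkill := ell_kill hna hℓprime hnorm hη (lt_of_le_of_lt hle' hbd1)
          (hest _ (norm_nonneg _) hle')
        exact ih ξ hkill hle
  -- split off the prime-to-ℓ part
  have hζ1 : ‖ζ‖ ≤ 1 := norm_le_one_of_pow_eq_one (by omega) hm
  set k := m.factorization ℓ with hk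
  have hfac : ℓ ^ k * (m / ℓ ^ k) = m := Nat.ordProj_mul_ordCompl_eq_self m ℓ
  have hnd : ¬ ℓ ∣ (m / ℓ ^ k) := Nat.not_dvd_ordCompl hℓprime (by omega)
  have hηn : (ζ ^ ℓ ^ k) ^ (m / ℓ ^ k) = 1 := by rw [← pow_mul, hfac]; exact hm
  have hηsm : ‖ζ ^ ℓ ^ k - 1‖ < 1 :=
    lt_of_le_of_lt (na_pow_sub_one_le hna hζ1 _) hsmall
  have hη1 : ζ ^ ℓ ^ k = 1 := coprime_kill hna hℓprime hnorm hnd hηn hηsm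
  exact key k ζ hη1 hnear
end

section
/- Let ℓ be a prime number and n ≥ 1 an integer. The set of quasi-unipotent n × n matrices over K is a closed subset of the space of n × n matrices over K. -/
open Polynomial Matrix

section Aux

variable {K : Type*} [NormedField K]

/-- root of unity predicate -/
private def IsRoU (ζ : K) : Prop := ∃ m : ℕ, 1 ≤ m ∧ ζ ^ m = 1

private lemma IsRoU.norm_eq_one {ζ : K} (h : IsRoU ζ) : ‖ζ‖ = 1 := by
  obtain ⟨m, hm, h1⟩ := h
  have h2 : ‖ζ‖ ^ m = 1 := by rw [← norm_pow, h1, norm_one]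
  rcases (pow_eq_one_iff_cases).mp h2 with h | h | h
  · omega
  · exact h
  · exfalso; nlinarith [norm_nonneg ζ, h.1]

private lemma norm_int_le_one (hna : IsNonarchimedean (fun x : K => ‖x‖)) (z : ℤ) :
    ‖(z : K)‖ ≤ 1 := by
  haveI : IsUltrametricDist K :=
    IsUltrametricDist.isUltrametricDist_of_isNonarchimedean_norm hna
  exact IsUltrametricDist.norm_intCast_le_one K z

variable {ℓ : ℕ}

private lemma norm_prime_lb (hna : IsNonarchimedean (fun x : K => ‖x‖))
    (hℓprime : ℓ.Prime) (hnorm : ‖(ℓ : K)‖ = (ℓ : ℝ)⁻¹) {p : ℕ} (hp : p.Prime) : (ℓ : ℝ)⁻¹ ≤ ‖(p : K)‖ := by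
  rcases eq_or_ne p ℓ with rfl | hne
  · rw [hnorm]
  · -- coprime, Bezout
    have hco : Nat.Coprime p ℓ := (Nat.coprime_primes hp hℓprime).mpr hne
    have hico : IsCoprime (p : ℤ) (ℓ : ℤ) := Int.isCoprime_iff_gcd_eq_one.mpr hco
    obtain ⟨a, b, hab⟩ := hico
    have h1 : (1 : K) = (a : K) * (p : K) + (b : K) * (ℓ : K) := by
      have := congrArg (fun z : ℤ => (z : K)) hab
      push_cast at this
      simpa using this.symm
    have hle : (1 : ℝ) ≤ max (‖(a : K) * (p : K)‖) (‖(b : K) * (ℓ : K)‖) := by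
      calc (1:ℝ) = ‖(1 : K)‖ := (norm_one).symm
        _ = ‖(a : K) * (p : K) + (b : K) * (ℓ : K)‖ := by rw [← h1]
        _ ≤ _ := hna _ _
    have hℓ2 : (2 : ℝ) ≤ (ℓ : ℝ) := by exact_mod_cast hℓprime.two_le
    have hℓinv : (ℓ : ℝ)⁻¹ < 1 := by
      rw [inv_lt_one_iff₀]; right; linarith
    have hb : ‖(b : K) * (ℓ : K)‖ < 1 := by
      rw [norm_mul, hnorm]
      calc ‖(b : K)‖ * (ℓ : ℝ)⁻¹ ≤ 1 * (ℓ : ℝ)⁻¹ := by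
            apply mul_le_mul_of_nonneg_right (norm_int_le_one hna b)
            positivity
        _ = (ℓ : ℝ)⁻¹ := one_mul _
        _ < 1 := hℓinv
    have ha : (1 : ℝ) ≤ ‖(a : K) * (p : K)‖ := by
      rcases max_cases (‖(a : K) * (p : K)‖) (‖(b : K) * (ℓ : K)‖) with ⟨heq, _⟩ | ⟨heq, _⟩
      · rw [heq] at hle; exact hle
      · rw [heq] at hle; linarith
    have : (1 : ℝ) ≤ ‖(p : K)‖ := by
      rw [norm_mul] at ha
      nlinarith [norm_int_le_one hna a, norm_nonneg ((a : K)), norm_nonneg ((p : K))]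
    linarith

private lemma norm_rou_sub_one_lb (hna : IsNonarchimedean (fun x : K => ‖x‖))
    (hℓprime : ℓ.Prime) (hnorm : ‖(ℓ : K)‖ = (ℓ : ℝ)⁻¹) {ζ : K} (hrou : IsRoU ζ) (hζ : ζ ≠ 1) :
    (ℓ : ℝ)⁻¹ ≤ ‖ζ - 1‖ := by
  classical
  obtain ⟨m0, hm0, hζm0⟩ := hrou
  have hfin : IsOfFinOrder ζ := isOfFinOrder_iff_pow_eq_one.mpr ⟨m0, by omega, hζm0⟩
  have hord0 : orderOf ζ ≠ 0 := hfin.orderOf_pos.ne'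
  have hord1 : orderOf ζ ≠ 1 := by
    simpa [orderOf_eq_one_iff] using hζ
  set p := (orderOf ζ).minFac with hp_def
  have hp : p.Prime := Nat.minFac_prime hord1
  have hpdvd : p ∣ orderOf ζ := Nat.minFac_dvd _
  set η := ζ ^ (orderOf ζ / p) with hη_def
  have hηord : orderOf η = p := orderOf_pow_orderOf_div hord0 hpdvd
  have hηp : η ^ p = 1 := by rw [← hηord]; exact pow_orderOf_eq_one η
  have hη1 : η ≠ 1 := by
    intro h
    rw [h, orderOf_one] at hηord
    exact hp.one_lt.ne' hηord.symm
  -- step 1 : ‖η - 1‖ ≤ ‖ζ - 1‖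
  have hnζ : ‖ζ‖ = 1 := IsRoU.norm_eq_one ⟨m0, hm0, hζm0⟩
  have step1 : ‖η - 1‖ ≤ ‖ζ - 1‖ := by
    have hgeo : (∑ i ∈ Finset.range (orderOf ζ / p), ζ ^ i) * (ζ - 1) = η - 1 := by
      rw [hη_def]; exact geom_sum_mul ζ _
    haveI : IsUltrametricDist K :=
      IsUltrametricDist.isUltrametricDist_of_isNonarchimedean_norm hna
    have hsum : ‖∑ i ∈ Finset.range (orderOf ζ / p), ζ ^ i‖ ≤ 1 := by
      apply IsUltrametricDist.norm_sum_le_of_forall_le_of_nonneg zero_le_one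
      intro i _
      rw [norm_pow, hnζ, one_pow]
    calc ‖η - 1‖ = ‖∑ i ∈ Finset.range (orderOf ζ / p), ζ ^ i‖ * ‖ζ - 1‖ := by
          rw [← hgeo, norm_mul]
      _ ≤ 1 * ‖ζ - 1‖ := by
          apply mul_le_mul_of_nonneg_right hsum (norm_nonneg _)
      _ = ‖ζ - 1‖ := one_mul _
  -- step 2 : ‖p‖ ≤ ‖η - 1‖ using the cyclotomic factorization
  have hprim : IsPrimitiveRoot η p := by
    have := IsPrimitiveRoot.orderOf η
    rwa [hηord] at this
  have hfact : (X : K[X]) ^ p - 1 = ∏ ζ' ∈ nthRootsFinset p (1 : K), (X - C ζ') :=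
    X_pow_sub_one_eq_prod hp.pos hprim
  have hone_mem : (1 : K) ∈ nthRootsFinset p (1 : K) := one_mem_nthRootsFinset hp.pos
  have hsplit : ((X : K[X]) - C 1) * ∏ ζ' ∈ (nthRootsFinset p (1 : K)).erase 1, (X - C ζ')
      = ∏ ζ' ∈ nthRootsFinset p (1 : K), (X - C ζ') :=
    Finset.mul_prod_erase _ (fun ζ' => (X : K[X]) - C ζ') hone_mem
  have hgeom : (∑ i ∈ Finset.range p, (X : K[X]) ^ i) * ((X : K[X]) - C 1)
      = (X : K[X]) ^ p - 1 := by
    simpa using geom_sum_mul (X : K[X]) p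
  have hcancel : ∏ ζ' ∈ (nthRootsFinset p (1 : K)).erase 1, ((X : K[X]) - C ζ')
      = ∑ i ∈ Finset.range p, (X : K[X]) ^ i := by
    have hX1 : ((X : K[X]) - C 1) ≠ 0 := X_sub_C_ne_zero 1
    apply mul_left_cancel₀ hX1
    rw [hsplit, ← hfact, ← hgeom, mul_comm]
  have heval : ∏ ζ' ∈ (nthRootsFinset p (1 : K)).erase 1, ((1 : K) - ζ') = (p : K) := by
    have := congrArg (Polynomial.eval (1 : K)) hcancel
    simpa [eval_prod, eval_finset_sum] using this
  have hη_mem : η ∈ (nthRootsFinset p (1 : K)).erase 1 :=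
    Finset.mem_erase.mpr ⟨hη1, (mem_nthRootsFinset hp.pos (1 : K)).mpr hηp⟩
  have hfactors_le : ∀ ζ' ∈ ((nthRootsFinset p (1 : K)).erase 1).erase η, ‖(1 : K) - ζ'‖ ≤ 1 := by
    intro ζ' hζ'
    have hζ'p : ζ' ^ p = 1 := by
      have h1 := Finset.mem_of_mem_erase (Finset.mem_of_mem_erase hζ')
      exact (mem_nthRootsFinset hp.pos (1 : K)).mp h1
    have hnζ' : ‖ζ'‖ = 1 := IsRoU.norm_eq_one ⟨p, hp.one_lt.le, hζ'p⟩
    have h2 := hna 1 (-ζ')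
    simpa [hnζ', sub_eq_add_neg] using h2
  have step2 : ‖(p : K)‖ ≤ ‖η - 1‖ := by
    have hsplit2 : ((1 : K) - η) * ∏ ζ' ∈ ((nthRootsFinset p (1 : K)).erase 1).erase η,
        ((1 : K) - ζ') = (p : K) := by
      rw [Finset.mul_prod_erase _ _ hη_mem]; exact heval
    have hprod_le : ‖∏ ζ' ∈ ((nthRootsFinset p (1 : K)).erase 1).erase η, ((1 : K) - ζ')‖ ≤ 1 := by
      rw [norm_prod]
      apply Finset.prod_le_one
      · intro i _; exact norm_nonneg _
      · exact hfactors_le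
    calc ‖(p : K)‖ = ‖(1 : K) - η‖ * ‖∏ ζ' ∈ ((nthRootsFinset p (1 : K)).erase 1).erase η,
          ((1 : K) - ζ')‖ := by rw [← norm_mul, hsplit2]
      _ ≤ ‖(1 : K) - η‖ * 1 := by
          apply mul_le_mul_of_nonneg_left hprod_le (norm_nonneg _)
      _ = ‖η - 1‖ := by rw [mul_one, norm_sub_rev]
  calc (ℓ : ℝ)⁻¹ ≤ ‖(p : K)‖ := norm_prime_lb hna hℓprime hnorm hp
    _ ≤ ‖η - 1‖ := step2
    _ ≤ ‖ζ - 1‖ := step1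

private lemma norm_rou_sub_lb (hna : IsNonarchimedean (fun x : K => ‖x‖))
    (hℓprime : ℓ.Prime) (hnorm : ‖(ℓ : K)‖ = (ℓ : ℝ)⁻¹) {ζ η : K} (hζ : IsRoU ζ) (hη : IsRoU η) (hne : ζ ≠ η) :
    (ℓ : ℝ)⁻¹ ≤ ‖ζ - η‖ := by
  have hηn : ‖η‖ = 1 := hη.norm_eq_one
  have hη0 : η ≠ 0 := by intro h; rw [h, norm_zero] at hηn; norm_num at hηn
  obtain ⟨m1, hm1, h1⟩ := hζ
  obtain ⟨m2, hm2, h2⟩ := hη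
  have hrou : IsRoU (ζ / η) := by
    refine ⟨m1 * m2, Nat.one_le_iff_ne_zero.mpr (by positivity), ?_⟩
    rw [div_pow, pow_mul, h1, one_pow, mul_comm m1 m2, pow_mul, h2, one_pow, div_one]
  have hne' : ζ / η ≠ 1 := by
    intro h
    exact hne (by field_simp at h; exact h)
  have := norm_rou_sub_one_lb hna hℓprime hnorm hrou hne'
  have heq : ‖ζ / η - 1‖ = ‖ζ - η‖ := by
    rw [show ζ / η - 1 = (ζ - η) / η by field_simp, norm_div, hηn, div_one]
  rwa [heq] at this

private lemma exists_dist_rou (hna : IsNonarchimedean (fun x : K => ‖x‖))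
    (hℓprime : ℓ.Prime) (hnorm : ‖(ℓ : K)‖ = (ℓ : ℝ)⁻¹) {α : K} (hα : ¬ IsRoU α) :
    ∃ d : ℝ, 0 < d ∧ ∀ ζ : K, IsRoU ζ → d ≤ ‖α - ζ‖ := by
  have hℓpos : (0 : ℝ) < (ℓ : ℝ)⁻¹ := by
    have := hℓprime.two_le
    positivity
  by_cases hex : ∃ ζ0 : K, IsRoU ζ0 ∧ ‖α - ζ0‖ < (ℓ : ℝ)⁻¹
  · obtain ⟨ζ0, hζ0, hlt⟩ := hex
    refine ⟨‖α - ζ0‖, ?_, ?_⟩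
    · rw [norm_pos_iff, sub_ne_zero]
      intro h; exact hα (h ▸ hζ0)
    · intro ζ hζ
      rcases eq_or_ne ζ ζ0 with rfl | hne
      · exact le_refl _
      · -- ‖α - ζ‖ ≥ ‖ζ0 - ζ‖ ≥ 1/ℓ > ‖α - ζ0‖
        have hsep : (ℓ : ℝ)⁻¹ ≤ ‖ζ0 - ζ‖ := norm_rou_sub_lb hna hℓprime hnorm hζ0 hζ (by
          intro h; exact hne h.symm)
        have hkey : ‖ζ0 - ζ‖ ≤ max (‖α - ζ0‖) (‖α - ζ‖) := by
          have h := hna (ζ0 - α) (α - ζ)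
          rw [show ζ0 - α + (α - ζ) = ζ0 - ζ by ring] at h
          simpa [norm_sub_rev ζ0 α] using h
        rcases max_cases (‖α - ζ0‖) (‖α - ζ‖) with ⟨heq, _⟩ | ⟨heq, _⟩
        · rw [heq] at hkey; linarith
        · rw [heq] at hkey; linarith
  · push_neg at hex
    exact ⟨(ℓ : ℝ)⁻¹, hℓpos, fun ζ hζ => hex ζ hζ⟩

end Aux

section MatrixAux

variable {K : Type*} [NormedField K] {n : ℕ}

private lemma eval_charpoly' (B : Matrix (Fin n) (Fin n) K) (α : K) :
    (Matrix.charpoly B).eval α = (Matrix.scalar (Fin n) α - B).det := by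
  classical
  rw [Matrix.charpoly, eval_det, Matrix.matPolyEquiv_charmatrix, eval_sub, eval_X,
    eval_C]

private lemma scalar_mulVec (α : K) (v : Fin n → K) :
    (Matrix.scalar (Fin n) α) *ᵥ v = α • v := by
  classical
  funext i
  simp [Matrix.scalar_apply, Matrix.mulVec_diagonal]

private lemma pow_mulVec_eigen {B : Matrix (Fin n) (Fin n) K} {β : K} {v : Fin n → K}
    (h : B *ᵥ v = β • v) (j : ℕ) : (B ^ j) *ᵥ v = (β ^ j) • v := by
  induction j with
  | zero => simp [Matrix.one_mulVec]
  | succ j ih =>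
      rw [pow_succ, ← Matrix.mulVec_mulVec, h, Matrix.mulVec_smul, ih, smul_smul, pow_succ,
        mul_comm]

/-- forward direction: quasi-unipotent matrices have root-of-unity charpoly roots -/
private lemma roots_rou_of_qu {B : Matrix (Fin n) (Fin n) K}
    (hB : ∃ m : ℕ, 1 ≤ m ∧ IsNilpotent (B ^ m - 1)) {β : K}
    (hβ : β ∈ (Matrix.charpoly B).roots) : IsRoU β := by
  classical
  obtain ⟨m, hm, k, hk⟩ := hB
  have hroot : (Matrix.charpoly B).eval β = 0 := (Polynomial.isRoot_of_mem_roots hβ)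
  have hdet : (Matrix.scalar (Fin n) β - B).det = 0 := by rw [← eval_charpoly']; exact hroot
  obtain ⟨v, hv0, hv⟩ := (Matrix.exists_mulVec_eq_zero_iff).mpr hdet
  have hBv : B *ᵥ v = β • v := by
    rw [Matrix.sub_mulVec] at hv
    have := sub_eq_zero.mp hv
    rw [← this, scalar_mulVec]
  have hCv : (B ^ m - 1) *ᵥ v = (β ^ m - 1) • v := by
    rw [Matrix.sub_mulVec, pow_mulVec_eigen hBv, Matrix.one_mulVec, sub_smul, one_smul]
  have hCkv : ((B ^ m - 1) ^ k) *ᵥ v = ((β ^ m - 1) ^ k) • v := pow_mulVec_eigen hCv k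
  rw [hk] at hCkv
  have h0 : ((β ^ m - 1) ^ k) • v = 0 := by rw [← hCkv]; simp [Matrix.zero_mulVec]
  have hpow : (β ^ m - 1) ^ k = 0 := by
    rcases smul_eq_zero.mp h0 with h | h
    · exact h
    · exact absurd h hv0
  have hβm : β ^ m - 1 = 0 := by
    by_cases hk0 : k = 0
    · rw [hk0, pow_zero] at hpow; exact absurd hpow one_ne_zero
    · exact pow_eq_zero_iff hk0 |>.mp hpow
  exact ⟨m, hm, by rwa [sub_eq_zero] at hβm⟩

private lemma exists_uniform_m (s : Multiset K) (h : ∀ β ∈ s, IsRoU β) :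
    ∃ m : ℕ, 1 ≤ m ∧ ∀ β ∈ s, β ^ m = 1 := by
  induction s using Multiset.induction_on with
  | empty => exact ⟨1, le_refl _, fun β hβ => absurd hβ (Multiset.notMem_zero β)⟩
  | cons a s ih =>
      obtain ⟨m1, hm1, ha⟩ := h a (Multiset.mem_cons_self a s)
      obtain ⟨m2, hm2, hs⟩ := ih (fun β hβ => h β (Multiset.mem_cons_of_mem hβ))
      refine ⟨m1 * m2, Nat.one_le_iff_ne_zero.mpr (by positivity), ?_⟩
      intro β hβ
      rcases Multiset.mem_cons.mp hβ with rfl | hβ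
      · rw [pow_mul, ha, one_pow]
      · rw [mul_comm, pow_mul, hs β hβ, one_pow]

/-- backward direction: if all roots of charpoly are roots of unity,
    the matrix is quasi-unipotent -/
private lemma qu_of_roots_rou [IsAlgClosed K] (hn : 1 ≤ n) {A : Matrix (Fin n) (Fin n) K}
    (h : ∀ β ∈ (Matrix.charpoly A).roots, IsRoU β) :
    ∃ m : ℕ, 1 ≤ m ∧ IsNilpotent (A ^ m - 1) := by
  classical
  obtain ⟨m, hm, hβm⟩ := exists_uniform_m _ h
  refine ⟨m, hm, n, ?_⟩
  have hsplits : (Matrix.charpoly A).Splits := IsAlgClosed.splits _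
  have hcard : Multiset.card (Matrix.charpoly A).roots = n := by
    rw [Polynomial.splits_iff_card_roots.mp hsplits, Matrix.charpoly_natDegree_eq_dim,
      Fintype.card_fin]
  have hfact : Matrix.charpoly A
      = ((Matrix.charpoly A).roots.map (fun a => X - C a)).prod :=
    (hsplits.eq_prod_roots_of_monic (Matrix.charpoly_monic A))
  have hdvd : Matrix.charpoly A ∣ ((X : K[X]) ^ m - 1) ^ n := by
    have h1 : ((Matrix.charpoly A).roots.map (fun a => X - C a)).prod
        ∣ ((Matrix.charpoly A).roots.map (fun _ => (X : K[X]) ^ m - 1)).prod := by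
      apply Multiset.prod_dvd_prod_of_dvd
      intro a ha
      have : (X : K[X]) - C a ∣ (X : K[X]) ^ m - (C a) ^ m := sub_dvd_pow_sub_pow _ _ m
      rwa [← _root_.map_pow, hβm a ha, _root_.map_one] at this
    rw [← hfact] at h1
    rwa [Multiset.map_const', Multiset.prod_replicate, hcard] at h1
  obtain ⟨q, hq⟩ := hdvd
  have haev : (A ^ m - 1) ^ n = Polynomial.aeval A (((X : K[X]) ^ m - 1) ^ n) := by
    simp [map_pow, map_sub]
  rw [haev, hq, _root_.map_mul, Matrix.aeval_self_charpoly, zero_mul]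

private lemma norm_multiset_prod_lb {d : ℝ} (hd : 0 ≤ d) (s : Multiset K)
    (h : ∀ x ∈ s, d ≤ ‖x‖) : d ^ Multiset.card s ≤ ‖s.prod‖ := by
  induction s using Multiset.induction_on with
  | empty => simp
  | cons a s ih =>
      rw [Multiset.prod_cons, Multiset.card_cons, pow_succ, norm_mul, mul_comm (‖a‖) _]
      exact mul_le_mul (ih (fun x hx => h x (Multiset.mem_cons_of_mem hx)))
        (h a (Multiset.mem_cons_self a s)) hd (norm_nonneg _)

end MatrixAux

/-- Let `ℓ` be a prime and `K` an algebraically closed normed field with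
nonarchimedean norm satisfying `‖(ℓ : K)‖ = (ℓ : ℝ)⁻¹`. For `n ≥ 1`, the set of
quasi-unipotent `n × n` matrices over `K` is closed in the space of `n × n` matrices
(with the entrywise topology). -/
theorem stmt4 (ℓ : ℕ) (hℓprime : ℓ.Prime)
    (K : Type*) [NormedField K] [IsAlgClosed K]
    (hna : IsNonarchimedean (fun x : K => ‖x‖))
    (hnorm : ‖(ℓ : K)‖ = (ℓ : ℝ)⁻¹)
    (n : ℕ) (hn : 1 ≤ n) :
    IsClosed {A : Matrix (Fin n) (Fin n) K | ∃ m : ℕ, 1 ≤ m ∧ IsNilpotent (A ^ m - 1)} := by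
  classical
  rw [← isOpen_compl_iff, isOpen_iff_forall_mem_open]
  intro A hA
  -- find a root of the charpoly of A that is not a root of unity
  have hAn : ¬ ∀ β ∈ (Matrix.charpoly A).roots, IsRoU β := by
    intro h
    exact hA (qu_of_roots_rou hn h)
  push_neg at hAn
  obtain ⟨α, hαroot, hαn⟩ := hAn
  obtain ⟨d, hd0, hd⟩ := exists_dist_rou hna hℓprime hnorm hαn
  refine ⟨{B | ‖(Matrix.scalar (Fin n) α - B).det‖ < d ^ n}, ?_, ?_, ?_⟩
  · -- the ball is contained in the complement
    intro B hB hBS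
    simp only [Set.mem_setOf_eq] at hB hBS
    -- all roots of charpoly B are roots of unity
    have hroots : ∀ β ∈ (Matrix.charpoly B).roots, IsRoU β :=
      fun β hβ => roots_rou_of_qu hBS hβ
    have hsplits : (Matrix.charpoly B).Splits := IsAlgClosed.splits _
    have hcard : Multiset.card (Matrix.charpoly B).roots = n := by
      rw [Polynomial.splits_iff_card_roots.mp hsplits, Matrix.charpoly_natDegree_eq_dim,
        Fintype.card_fin]
    have hfact : Matrix.charpoly B
        = ((Matrix.charpoly B).roots.map (fun a => X - C a)).prod :=
      hsplits.eq_prod_roots_of_monic (Matrix.charpoly_monic B)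
    have heval : (Matrix.charpoly B).eval α
        = ((Matrix.charpoly B).roots.map (fun β => α - β)).prod := by
      conv_lhs => rw [hfact]
      rw [Polynomial.eval_multiset_prod, Multiset.map_map]
      congr 1
      apply Multiset.map_congr rfl
      intro β hβ
      simp
    have hlb : d ^ n ≤ ‖(Matrix.charpoly B).eval α‖ := by
      rw [heval]
      have := norm_multiset_prod_lb hd0.le ((Matrix.charpoly B).roots.map (fun β => α - β)) ?_
      · rwa [Multiset.card_map, hcard] at this
      · intro x hx
        obtain ⟨β, hβ, rfl⟩ := Multiset.mem_map.mp hx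
        exact hd β (hroots β hβ)
    rw [eval_charpoly'] at hlb
    linarith
  · -- openness
    have hcont : Continuous fun B : Matrix (Fin n) (Fin n) K =>
        ‖(Matrix.scalar (Fin n) α - B).det‖ :=
      ((continuous_const.sub continuous_id).matrix_det).norm
    exact isOpen_lt hcont continuous_const
  · -- A belongs to the ball
    simp only [Set.mem_setOf_eq, ← eval_charpoly']
    have h0 : (Matrix.charpoly A).eval α = 0 := Polynomial.isRoot_of_mem_roots hαroot
    rw [h0, norm_zero]
    positivity
end

section
/- Let ℓ be a prime number and n ≥ 1 an integer. The set of unipotent n × n matrices over K is open in the set of quasi-unipotent n × n matrices over K for the subspace topology; equivalently, there exists an open subset V of the space of n × n matrices over K such that the unipotent matrices are exactly the intersection of V with the quasi-unipotent matrices. -/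
section aux
variable {K : Type*} [NormedField K] [IsUltrametricDist K]

lemma aux_norm_coprime (ℓ : ℕ) (hp : ℓ.Prime) (hℓ : ‖(ℓ : K)‖ = (ℓ : ℝ)⁻¹)
    (m : ℕ) (hm : ¬ ℓ ∣ m) : ‖(m : K)‖ = 1 := by
  have h1 : ‖(m : K)‖ ≤ 1 := IsUltrametricDist.norm_natCast_le_one K m
  refine le_antisymm h1 ?_
  by_contra hlt
  push_neg at hlt
  have hcop : Nat.Coprime ℓ m := (Nat.Prime.coprime_iff_not_dvd hp).mpr hm
  have hbez := Nat.gcd_eq_gcd_ab ℓ m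
  rw [hcop.gcd_eq_one] at hbez
  have hK : (1 : K) = (ℓ : K) * ((Nat.gcdA ℓ m : ℤ) : K) + (m : K) * ((Nat.gcdB ℓ m : ℤ) : K) := by
    have := congrArg (fun z : ℤ => (z : K)) hbez
    push_cast at this ⊢
    exact this
  have hmax := IsUltrametricDist.norm_add_le_max ((ℓ : K) * ((Nat.gcdA ℓ m : ℤ) : K))
      ((m : K) * ((Nat.gcdB ℓ m : ℤ) : K))
  rw [← hK, norm_one, norm_mul, norm_mul, hℓ] at hmax
  have hℓ2 : (2 : ℝ) ≤ (ℓ : ℝ) := by exact_mod_cast hp.two_le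
  have ha : ‖((Nat.gcdA ℓ m : ℤ) : K)‖ ≤ 1 := IsUltrametricDist.norm_intCast_le_one K _
  have hb : ‖((Nat.gcdB ℓ m : ℤ) : K)‖ ≤ 1 := IsUltrametricDist.norm_intCast_le_one K _
  have h1' : (ℓ : ℝ)⁻¹ * ‖((Nat.gcdA ℓ m : ℤ) : K)‖ ≤ (ℓ : ℝ)⁻¹ := by
    nlinarith [norm_nonneg ((Nat.gcdA ℓ m : ℤ) : K), inv_nonneg.mpr (by linarith : (0:ℝ) ≤ (ℓ:ℝ))]
  have h2' : ‖(m : K)‖ * ‖((Nat.gcdB ℓ m : ℤ) : K)‖ < 1 := by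
    nlinarith [norm_nonneg ((Nat.gcdB ℓ m : ℤ) : K), norm_nonneg ((m : K))]
  have hinv : (ℓ : ℝ)⁻¹ < 1 := by
    rw [inv_lt_one_iff₀]; right; linarith
  have := le_max_iff.mp hmax
  rcases this with h | h
  · linarith
  · linarith
end aux

section aux2
variable {K : Type*} [NormedField K] [IsUltrametricDist K]

lemma aux_key (ζ : K) (q : ℕ) (hq : 1 ≤ q) (hζ : ζ ^ q = 1) (hne : ζ ≠ 1) :
    ‖(q : K)‖ ≤ ‖ζ - 1‖ := by
  have hz1 : ‖ζ‖ = 1 := by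
    have h : ‖ζ‖ ^ q = 1 := by rw [← norm_pow, hζ, norm_one]
    rcases lt_trichotomy ‖ζ‖ 1 with hc | hc | hc
    · exfalso
      have := pow_lt_one₀ (norm_nonneg ζ) hc (by omega : q ≠ 0)
      linarith
    · exact hc
    · exfalso
      have := one_lt_pow₀ hc (by omega : q ≠ 0)
      linarith
  have ht1 : ‖ζ - 1‖ ≤ 1 := by
    have := IsUltrametricDist.norm_add_le_max ζ (-1 : K)
    rw [← sub_eq_add_neg, norm_neg, norm_one, hz1] at this
    simpa using this
  have htpos : 0 < ‖ζ - 1‖ := by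
    rw [norm_pos_iff]; exact sub_ne_zero_of_ne hne
  have hbin := add_pow (ζ - 1) 1 q
  rw [sub_add_cancel] at hbin
  have hsum : (ζ - 1) * q + ∑ k ∈ Finset.Ico 2 (q + 1), (ζ - 1) ^ k * (q.choose k : K) = 0 := by
    rw [Finset.range_eq_Ico, Finset.sum_eq_sum_Ico_succ_bot (by omega),
      Finset.sum_eq_sum_Ico_succ_bot (by omega)] at hbin
    simp only [pow_zero, one_pow, pow_one, Nat.choose_zero_right, Nat.choose_one_right,
      Nat.cast_one, mul_one, one_mul] at hbin
    rw [hζ] at hbin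
    norm_num [Nat.choose_one_right] at hbin
    exact hbin
  have heq : ‖(ζ - 1) * (q : K)‖ = ‖∑ k ∈ Finset.Ico 2 (q + 1), (ζ - 1) ^ k * (q.choose k : K)‖ := by
    rw [← norm_neg (∑ k ∈ Finset.Ico 2 (q + 1), (ζ - 1) ^ k * (q.choose k : K))]
    congr 1
    linear_combination hsum
  have hbound : ‖∑ k ∈ Finset.Ico 2 (q + 1), (ζ - 1) ^ k * (q.choose k : K)‖ ≤ ‖ζ - 1‖ ^ 2 := by
    refine IsUltrametricDist.norm_sum_le_of_forall_le_of_nonneg (by positivity) ?_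
    intro k hk
    rw [Finset.mem_Ico] at hk
    rw [norm_mul, norm_pow]
    calc ‖ζ - 1‖ ^ k * ‖(q.choose k : K)‖ ≤ ‖ζ - 1‖ ^ k * 1 := by
          have := IsUltrametricDist.norm_natCast_le_one K (q.choose k)
          nlinarith [pow_nonneg (norm_nonneg (ζ - 1)) k]
      _ = ‖ζ - 1‖ ^ k := mul_one _
      _ ≤ ‖ζ - 1‖ ^ 2 := pow_le_pow_of_le_one (norm_nonneg _) ht1 hk.1
  have hfin : ‖ζ - 1‖ * ‖(q : K)‖ ≤ ‖ζ - 1‖ ^ 2 := by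
    rw [← norm_mul]
    exact heq.le.trans hbound
  nlinarith [hfin, htpos]

end aux2

section aux3
variable {K : Type*} [NormedField K] [IsUltrametricDist K]

lemma aux_norm_one {ζ : K} {m : ℕ} (hm : 1 ≤ m) (hζ : ζ ^ m = 1) : ‖ζ‖ = 1 := by
  have h : ‖ζ‖ ^ m = 1 := by rw [← norm_pow, hζ, norm_one]
  rcases lt_trichotomy ‖ζ‖ 1 with hc | hc | hc
  · exfalso
    have := pow_lt_one₀ (norm_nonneg ζ) hc (by omega : m ≠ 0)
    linarith
  · exact hc
  · exfalso
    have := one_lt_pow₀ hc (by omega : m ≠ 0)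
    linarith

lemma aux_ru (ℓ : ℕ) (hp : ℓ.Prime) (hℓ : ‖(ℓ : K)‖ = (ℓ : ℝ)⁻¹) :
    ∀ m : ℕ, 1 ≤ m → ∀ ζ : K, ζ ^ m = 1 → ζ ≠ 1 → (ℓ : ℝ)⁻¹ ≤ ‖ζ - 1‖ := by
  intro m
  induction m using Nat.strong_induction_on with
  | _ m ih =>
    intro hm ζ hζ hne
    rcases eq_or_lt_of_le hm with h1 | h2
    · exfalso; apply hne; simpa [← h1] using hζ
    · -- m ≥ 2
      set p := m.minFac with hpdef
      have hpp : p.Prime := Nat.minFac_prime (by omega)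
      have hpd : p ∣ m := Nat.minFac_dvd m
      obtain ⟨m₂, hm₂⟩ := hpd
      have hm₂pos : 1 ≤ m₂ := by
        rcases Nat.eq_zero_or_pos m₂ with h | h
        · rw [h, mul_zero] at hm₂; omega
        · exact h
      have hm₂lt : m₂ < m := by
        have := hpp.two_le
        nlinarith
      set η := ζ ^ m₂ with hηdef
      have hηp : η ^ p = 1 := by
        rw [hηdef, ← pow_mul, mul_comm, ← hm₂, hζ]
      by_cases hη1 : η = 1
      · exact ih m₂ hm₂lt hm₂pos ζ hη1 hne
      · have hkey : ‖(p : K)‖ ≤ ‖η - 1‖ := aux_key η p hpp.one_lt.le hηp hη1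
        have hnp : (ℓ : ℝ)⁻¹ ≤ ‖(p : K)‖ := by
          by_cases hpe : p = ℓ
          · rw [hpe, hℓ]
          · have : ¬ ℓ ∣ p := by
              intro hd
              exact hpe ((Nat.prime_dvd_prime_iff_eq hp hpp).mp hd).symm
            rw [aux_norm_coprime ℓ hp hℓ p this]
            rw [inv_le_one_iff₀]
            right
            exact_mod_cast hp.one_lt.le
        have hle : ‖η - 1‖ ≤ ‖ζ - 1‖ := by
          have hgeo := geom_sum_mul ζ m₂
          have : ‖η - 1‖ = ‖∑ i ∈ Finset.range m₂, ζ ^ i‖ * ‖ζ - 1‖ := by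
            rw [← norm_mul, hgeo]
          rw [this]
          have hb : ‖∑ i ∈ Finset.range m₂, ζ ^ i‖ ≤ 1 := by
            refine IsUltrametricDist.norm_sum_le_of_forall_le_of_nonneg zero_le_one ?_
            intro i _
            rw [norm_pow, aux_norm_one hm hζ, one_pow]
          nlinarith [norm_nonneg (ζ - 1)]
        linarith
end aux3

section mat
variable {K : Type*} [Field K] {n : ℕ}

lemma aux_mulVec_pow {B : Matrix (Fin n) (Fin n) K} {v : Fin n → K} {μ : K}
    (h : B.mulVec v = μ • v) (k : ℕ) : (B ^ k).mulVec v = μ ^ k • v := by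
  induction k with
  | zero => simp [Matrix.one_mulVec]
  | succ k ih =>
    rw [pow_succ, ← Matrix.mulVec_mulVec, h, Matrix.mulVec_smul, ih, pow_succ, mul_comm,
      mul_smul]

lemma aux_exists_eigvec (A : Matrix (Fin n) (Fin n) K) (r : K)
    (hr : (Matrix.charpoly A).IsRoot r) : ∃ v : Fin n → K, v ≠ 0 ∧ A.mulVec v = r • v := by
  have hdet : (r • (1 : Matrix (Fin n) (Fin n) K) - A).det = 0 := by
    have h1 : Polynomial.eval r (Matrix.charpoly A) = 0 := hr
    rw [Matrix.charpoly] at h1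
    rw [show Polynomial.eval r A.charmatrix.det = (Polynomial.evalRingHom r) A.charmatrix.det
      from rfl, RingHom.map_det] at h1
    convert h1 using 2
    ext i j
    by_cases hij : i = j
    · subst hij
      simp [Matrix.charmatrix_apply_eq, Matrix.one_apply]
    · simp [Matrix.charmatrix_apply_ne _ _ _ hij, Matrix.one_apply_ne hij]
  obtain ⟨v, hv0, hv⟩ := (Matrix.exists_mulVec_eq_zero_iff).mpr hdet
  refine ⟨v, hv0, ?_⟩
  rw [Matrix.sub_mulVec, Matrix.smul_mulVec, Matrix.one_mulVec, sub_eq_zero] at hv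
  exact hv.symm

lemma aux_eig_pow_eq (A : Matrix (Fin n) (Fin n) K) {v : Fin n → K} {r : K}
    (hv0 : v ≠ 0) (hv : A.mulVec v = r • v) {B : Matrix (Fin n) (Fin n) K}
    (hB : IsNilpotent B) {μ : K} (hμ : B.mulVec v = μ • v) : μ = 0 := by
  obtain ⟨k, hk⟩ := hB
  have := aux_mulVec_pow hμ k
  rw [hk, Matrix.zero_mulVec] at this
  obtain ⟨i, hi⟩ := Function.ne_iff.mp hv0
  have := congrFun this i
  simp only [Pi.zero_apply, Pi.smul_apply, smul_eq_mul] at this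
  have hμk : μ ^ k = 0 := by
    rcases mul_eq_zero.mp this.symm with h | h
    · exact h
    · exact absurd h hi
  exact (pow_eq_zero_iff'.mp hμk).1
end mat

section mat2
open Polynomial
variable {K : Type*} [Field K] {n : ℕ}

lemma aux_nilp_pow (A : Matrix (Fin n) (Fin n) K) (h : IsNilpotent A) : A ^ n = 0 := by
  have h2 := Matrix.isNilpotent_charpoly_sub_pow_of_isNilpotent h
  have h3 : Matrix.charpoly A - X ^ (Fintype.card (Fin n)) = 0 := h2.eq_zero
  have h4 : Matrix.charpoly A = X ^ n := by
    rw [sub_eq_zero] at h3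
    simpa using h3
  have h5 := Matrix.aeval_self_charpoly A
  rw [h4] at h5
  simpa using h5

lemma aux_unip [IsAlgClosed K] (A : Matrix (Fin n) (Fin n) K)
    (h : ∀ r ∈ (Matrix.charpoly A).roots, r = 1) : (A - 1) ^ n = 0 := by
  have hmonic := Matrix.charpoly_monic A
  have hsplit : Splits (Matrix.charpoly A) := IsAlgClosed.splits _
  have hcard : (Matrix.charpoly A).roots.card = n := by
    rw [splits_iff_card_roots.mp hsplit]
    simp
  have hrep : (Matrix.charpoly A).roots = Multiset.replicate n 1 :=
    Multiset.eq_replicate.mpr ⟨hcard, h⟩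
  have hcp : Matrix.charpoly A = (X - C 1) ^ n := by
    rw [hsplit.eq_prod_roots_of_monic hmonic, hrep, Multiset.map_replicate,
      Multiset.prod_replicate]
  have h5 := Matrix.aeval_self_charpoly A
  rw [hcp] at h5
  rw [map_pow, map_sub, aeval_X] at h5
  simpa using h5
end mat2

/-- Let `ℓ` be a prime and `K` an algebraically closed normed field with
nonarchimedean norm satisfying `‖(ℓ : K)‖ = (ℓ : ℝ)⁻¹`. For `n ≥ 1`, the set of unipotent
`n × n` matrices over `K` is open in the set of quasi-unipotent `n × n` matrices for the
subspace topology: there is an open set `V` of matrices whose intersection with the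
quasi-unipotent matrices is exactly the set of unipotent matrices. -/
theorem stmt5 (ℓ : ℕ) (hℓprime : ℓ.Prime)
    (K : Type*) [NormedField K] [IsAlgClosed K]
    (hna : IsNonarchimedean (fun x : K => ‖x‖))
    (hnorm : ‖(ℓ : K)‖ = (ℓ : ℝ)⁻¹)
    (n : ℕ) (hn : 1 ≤ n) :
    ∃ V : Set (Matrix (Fin n) (Fin n) K), IsOpen V ∧
      {A : Matrix (Fin n) (Fin n) K | IsNilpotent (A - 1)} =
        V ∩ {A : Matrix (Fin n) (Fin n) K | ∃ m : ℕ, 1 ≤ m ∧ IsNilpotent (A ^ m - 1)} := by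
  haveI : IsUltrametricDist K :=
    IsUltrametricDist.isUltrametricDist_of_isNonarchimedean_norm hna
  have hℓpos : (0 : ℝ) < (ℓ : ℝ) := by exact_mod_cast hℓprime.pos
  set ε : ℝ := ((ℓ : ℝ)⁻¹) ^ n with hεdef
  have hεpos : 0 < ε := by positivity
  refine ⟨{A | ∀ i j, ‖((A - 1) ^ n) i j‖ < ε}, ?_, ?_⟩
  · -- openness
    have hcont : Continuous fun A : Matrix (Fin n) (Fin n) K => (A - 1) ^ n :=
      ((continuous_id.sub continuous_const).pow n)
    have hset : {A : Matrix (Fin n) (Fin n) K | ∀ i j, ‖((A - 1) ^ n) i j‖ < ε}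
        = ⋂ i, ⋂ j, {A | ‖((A - 1) ^ n) i j‖ < ε} := by
      ext A; simp
    rw [hset]
    refine isOpen_iInter_of_finite fun i => isOpen_iInter_of_finite fun j => ?_
    have hc2 : Continuous fun A : Matrix (Fin n) (Fin n) K => ‖((A - 1) ^ n) i j‖ :=
      ((continuous_apply j).comp ((continuous_apply i).comp hcont)).norm
    exact isOpen_lt hc2 continuous_const
  · ext A
    simp only [Set.mem_setOf_eq, Set.mem_inter_iff]
    constructor
    · intro hA
      have hA' : (A - 1) ^ n = 0 := aux_nilp_pow _ hA
      refine ⟨fun i j => by rw [hA']; simpa using hεpos, 1, le_refl 1, ?_⟩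
      simpa using hA
    · rintro ⟨hV, m, hm, hQ⟩
      refine ⟨n, aux_unip A ?_⟩
      intro r hroot
      obtain ⟨v, hv0, hv⟩ := aux_exists_eigvec A r (Polynomial.mem_roots'.mp hroot).2
      have h1 : (A ^ m - 1).mulVec v = (r ^ m - 1) • v := by
        rw [Matrix.sub_mulVec, aux_mulVec_pow hv m, Matrix.one_mulVec, sub_smul, one_smul]
      have hrm : r ^ m - 1 = 0 := aux_eig_pow_eq A hv0 hv hQ h1
      by_contra hne
      have hbound : (ℓ : ℝ)⁻¹ ≤ ‖r - 1‖ :=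
        aux_ru ℓ hℓprime hnorm m hm r (sub_eq_zero.mp hrm) hne
      have h2 : ((A - 1) ^ n).mulVec v = (r - 1) ^ n • v := by
        refine aux_mulVec_pow ?_ n
        rw [Matrix.sub_mulVec, hv, Matrix.one_mulVec, sub_smul, one_smul]
      haveI : Nonempty (Fin n) := ⟨⟨0, hn⟩⟩
      obtain ⟨i0, -, hi0⟩ := Finset.exists_max_image Finset.univ (fun i => ‖v i‖)
        Finset.univ_nonempty
      have hvi0 : 0 < ‖v i0‖ := by
        obtain ⟨i, hi⟩ := Function.ne_iff.mp hv0
        calc (0 : ℝ) < ‖v i‖ := norm_pos_iff.mpr hi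
          _ ≤ ‖v i0‖ := hi0 i (Finset.mem_univ i)
      set M := (A - 1) ^ n with hM
      set C : ℝ := Finset.univ.sup' Finset.univ_nonempty (fun j => ‖M i0 j‖) with hC
      have hCε : C < ε := by
        rw [hC, Finset.sup'_lt_iff]
        intro j _
        exact hV i0 j
      have hterm : ∀ j ∈ Finset.univ (α := Fin n), ‖M i0 j * v j‖ ≤ C * ‖v i0‖ := by
        intro j _
        rw [norm_mul]
        have h3 : ‖M i0 j‖ ≤ C := by
          rw [hC]; exact Finset.le_sup' (fun j => ‖M i0 j‖) (Finset.mem_univ j)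
        have h4 : ‖v j‖ ≤ ‖v i0‖ := hi0 j (Finset.mem_univ j)
        have h5 : (0 : ℝ) ≤ ‖M i0 j‖ := norm_nonneg _
        nlinarith [norm_nonneg (v j)]
      have hCnn : 0 ≤ C := by
        refine le_trans (norm_nonneg (M i0 i0)) ?_
        rw [hC]; exact Finset.le_sup' (fun j => ‖M i0 j‖) (Finset.mem_univ i0)
      have hsumle : ‖(M.mulVec v) i0‖ ≤ C * ‖v i0‖ := by
        have : (M.mulVec v) i0 = ∑ j, M i0 j * v j := by
          simp [Matrix.mulVec, dotProduct]
        rw [this]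
        exact IsUltrametricDist.norm_sum_le_of_forall_le_of_nonneg
          (by positivity) hterm
      rw [h2] at hsumle
      simp only [Pi.smul_apply, smul_eq_mul, norm_mul, norm_pow] at hsumle
      have h6 : ‖r - 1‖ ^ n ≤ C := by
        have := mul_le_mul_of_nonneg_right (le_refl (1:ℝ)) hvi0.le
        nlinarith [hvi0]
      have h7 : ε ≤ ‖r - 1‖ ^ n := by
        rw [hεdef]
        exact pow_le_pow_left₀ (by positivity) hbound n
      linarith
end

section
/- Let Π be a topological space, let B be a nonempty collection of closed subsets of Π that is downward directed (for all E₁, E₂ ∈ B there exists E ∈ B with E ⊆ E₁ ∩ E₂), and let σ : Π → C be a function to a set C such that every fiber σ⁻¹({c}) (c ∈ C) is compact. Then the image of the intersection equals the intersection of the images: σ(⋂_{E ∈ B} E) = ⋂_{E ∈ B} σ(E). -/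
/-- Let `P` be a topological space, `B` a nonempty downward-directed
family of closed subsets of `P`, and `σ : Π → C` a map all of whose fibers are compact.
Then `σ(⋂_{E ∈ B} E) = ⋂_{E ∈ B} σ(E)`. -/
theorem stmt6 {P : Type*} [TopologicalSpace P] {C : Type*}
    (B : Set (Set P)) (hne : B.Nonempty)
    (hclosed : ∀ E ∈ B, IsClosed E)
    (hdir : ∀ E₁ ∈ B, ∀ E₂ ∈ B, ∃ E ∈ B, E ⊆ E₁ ∩ E₂)
    (σ : P → C) (hfib : ∀ c : C, IsCompact (σ ⁻¹' {c})) :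
    σ '' (⋂ E ∈ B, E) = ⋂ E ∈ B, σ '' E := by
  apply Set.Subset.antisymm
  · rintro c ⟨x, hx, rfl⟩
    simp only [Set.mem_iInter] at hx ⊢
    exact fun E hE => ⟨x, hx E hE, rfl⟩
  · intro c hc
    simp only [Set.mem_iInter] at hc
    haveI : Nonempty B := ⟨⟨hne.choose, hne.choose_spec⟩⟩
    set t : B → Set P := fun E => (E : Set P) with ht
    have hdir' : Directed (· ⊇ ·) t := by
      rintro ⟨E₁, h₁⟩ ⟨E₂, h₂⟩
      obtain ⟨E, hE, hsub⟩ := hdir E₁ h₁ E₂ h₂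
      exact ⟨⟨E, hE⟩, fun x hx => (hsub hx).1, fun x hx => (hsub hx).2⟩
    by_contra hcon
    have hempty : (σ ⁻¹' {c} ∩ ⋂ E : B, t E) = ∅ := by
      rw [Set.eq_empty_iff_forall_notMem]
      rintro x ⟨hxc, hx⟩
      simp only [Set.mem_iInter] at hx
      exact hcon ⟨x, Set.mem_iInter.2 fun E => Set.mem_iInter.2 fun hE => hx ⟨E, hE⟩, hxc⟩
    obtain ⟨⟨E, hE⟩, hEemp⟩ := (hfib c).elim_directed_family_closed t
      (fun ⟨E, hE⟩ => hclosed E hE) hempty hdir'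
    obtain ⟨x, hx, hxc⟩ := hc E hE
    exact Set.eq_empty_iff_forall_notMem.1 hEemp x ⟨hxc, hx⟩
end

section
/- Let P be a set of prime numbers, let G and H be profinite groups, and let α : G → H be a continuous group homomorphism. Then α(G^P) = α(G) ∩ H^P, where for a profinite group Γ, Γ^P denotes the set of elements whose supernatural order has all of its prime factors in P. -/
/-- For a set `P` of primes and a topological group `Γ`, `g ∈ Γ^P` means: for every open
normal subgroup `U` of `Γ`, every prime factor of the order of the image of `g` in `Γ ⧸ U`
belongs to `P`. For a profinite group `Γ`, this says that all prime factors of the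
supernatural order of `g` lie in `P`. -/
def memPPart (P : Set ℕ) {Γ : Type*} [Group Γ] [TopologicalSpace Γ] (g : Γ) : Prop :=
  ∀ (U : Subgroup Γ) (_ : U.Normal) (_ : IsOpen (U : Set Γ)) (p : ℕ), p.Prime →
    p ∣ orderOf (QuotientGroup.mk g : Γ ⧸ U) → p ∈ P

open scoped Classical

/-- Arithmetic key lemma: split off the P-part of the order of `x`. -/
lemma exists_good_pow (P : Set ℕ) {Γ : Type*} [Group Γ] (x : Γ) (hx : 0 < orderOf x) :
    ∃ k : ℕ, (∀ p : ℕ, p.Prime → p ∣ orderOf (x ^ k) → p ∈ P) ∧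
      ∀ d : ℕ, d ∣ orderOf x → (∀ p : ℕ, p.Prime → p ∣ d → p ∈ P) → k ≡ 1 [MOD d] := by
  set n := orderOf x with hn
  set a : ℕ := ∏ p ∈ n.primeFactors.filter (· ∈ P), p ^ n.factorization p with ha
  set b : ℕ := ∏ p ∈ n.primeFactors.filter (¬ · ∈ P), p ^ n.factorization p with hb
  have hab : a * b = n := by
    rw [ha, hb, Finset.prod_filter_mul_prod_filter_not]
    conv_rhs => rw [← Nat.factorization_prod_pow_eq_self hx.ne']
    rw [Nat.prod_factorization_eq_prod_primeFactors]
  have hpa : ∀ p : ℕ, p.Prime → p ∣ a → p ∈ P := by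
    intro p hp hpd
    obtain ⟨q, hq, hdvd⟩ := (Prime.dvd_finset_prod_iff hp.prime _).mp hpd
    obtain ⟨hq1, hq2⟩ := Finset.mem_filter.mp hq
    have : p = q := (Nat.prime_dvd_prime_iff_eq hp (Nat.prime_of_mem_primeFactors hq1)).mp
      (hp.dvd_of_dvd_pow hdvd)
    rwa [this]
  have hpb : ∀ p : ℕ, p.Prime → p ∣ b → p ∉ P := by
    intro p hp hpd
    obtain ⟨q, hq, hdvd⟩ := (Prime.dvd_finset_prod_iff hp.prime _).mp hpd
    obtain ⟨hq1, hq2⟩ := Finset.mem_filter.mp hq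
    have : p = q := (Nat.prime_dvd_prime_iff_eq hp (Nat.prime_of_mem_primeFactors hq1)).mp
      (hp.dvd_of_dvd_pow hdvd)
    rwa [this]
  have cop : Nat.Coprime a b := by
    by_contra hcop
    obtain ⟨p, hp, hp1, hp2⟩ := Nat.Prime.not_coprime_iff_dvd.mp hcop
    exact hpb p hp hp2 (hpa p hp hp1)
  obtain ⟨k, hk1, hk2⟩ := Nat.chineseRemainder cop 1 0
  have hbk : b ∣ k := (Nat.modEq_zero_iff_dvd).mp hk2
  refine ⟨k, ?_, ?_⟩
  · intro p hp hpd
    refine hpa p hp (dvd_trans hpd ?_)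
    rw [orderOf_dvd_iff_pow_eq_one, ← pow_mul]
    apply orderOf_dvd_iff_pow_eq_one.mp
    obtain ⟨c, rfl⟩ := hbk
    rw [← hn, ← hab]
    exact ⟨c, by ring⟩
  · intro d hd hdP
    have copdb : Nat.Coprime d b := by
      by_contra hcop
      obtain ⟨p, hp, hp1, hp2⟩ := Nat.Prime.not_coprime_iff_dvd.mp hcop
      exact hpb p hp hp2 (hdP p hp hp1)
    exact hk1.of_dvd (copdb.dvd_of_dvd_mul_right (hab ▸ hd))

lemma orderOf_mk_dvd_of_le {G : Type*} [Group G] {N U : Subgroup G} [N.Normal] [U.Normal]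
    (h : N ≤ U) (g : G) :
    orderOf (QuotientGroup.mk g : G ⧸ U) ∣ orderOf (QuotientGroup.mk g : G ⧸ N) := by
  exact
    orderOf_map_dvd (QuotientGroup.map N U (MonoidHom.id G) (fun x hx => h hx))
      (QuotientGroup.mk g)

lemma orderOf_mk_map_dvd {G H : Type*} [Group G] [Group H] (α : G →* H) {N : Subgroup G}
    {V : Subgroup H} [N.Normal] [V.Normal] (h : N ≤ V.comap α) (g : G) :
    orderOf (QuotientGroup.mk (α g) : H ⧸ V) ∣ orderOf (QuotientGroup.mk g : G ⧸ N) := by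
  simpa [QuotientGroup.map_mk] using
    orderOf_map_dvd (QuotientGroup.map N V α h) (QuotientGroup.mk g)


/-- Let `P` be a set of primes, `G`, `H` profinite groups and
`α : G → H` a continuous homomorphism. Then `α(G^P) = α(G) ∩ H^P`. -/
theorem stmt8 (P : Set ℕ) (hP : ∀ p ∈ P, p.Prime)
    (G H : Type*) [Group G] [TopologicalSpace G] [IsTopologicalGroup G]
    [CompactSpace G] [T2Space G] [TotallyDisconnectedSpace G]
    [Group H] [TopologicalSpace H] [IsTopologicalGroup H]
    [CompactSpace H] [T2Space H] [TotallyDisconnectedSpace H]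
    (α : G →* H) (hα : Continuous α) :
    α '' {g : G | memPPart P g} = Set.range α ∩ {h : H | memPPart P h} := by
  classical
  haveI : TotallySeparatedSpace H := loc_compact_t2_tot_disc_iff_tot_sep.mp inferInstance
  ext h
  simp only [Set.mem_image, Set.mem_inter_iff, Set.mem_range, Set.mem_setOf_eq]
  constructor
  · rintro ⟨g, hg, rfl⟩
    refine ⟨⟨g, rfl⟩, ?_⟩
    intro V hVn hVo p hp hdvd
    haveI := hVn
    have hUn : (V.comap α).Normal := hVn.comap α
    have hUo : IsOpen ((V.comap α : Subgroup G) : Set G) := by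
      rw [Subgroup.coe_comap]; exact hVo.preimage hα
    exact hg (V.comap α) hUn hUo p hp (hdvd.trans (orderOf_mk_map_dvd α le_rfl g))
  · rintro ⟨⟨g₀, rfl⟩, hh⟩
    set S : OpenNormalSubgroup G × OpenNormalSubgroup H → Set G := fun i =>
      {g : G | (QuotientGroup.mk (α g) : H ⧸ i.2.toSubgroup) = QuotientGroup.mk (α g₀) ∧
        ∀ p : ℕ, p.Prime → p ∣ orderOf (QuotientGroup.mk g : G ⧸ i.1.toSubgroup) → p ∈ P}
      with hSdef
    have hclosed : ∀ i, IsClosed (S i) := by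
      intro i
      haveI := QuotientGroup.discreteTopology i.2.toOpenSubgroup.isOpen
      haveI := QuotientGroup.discreteTopology i.1.toOpenSubgroup.isOpen
      have h1 : IsClosed {g : G |
          (QuotientGroup.mk (α g) : H ⧸ i.2.toSubgroup) = QuotientGroup.mk (α g₀)} :=
        IsClosed.preimage (QuotientGroup.continuous_mk.comp hα)
          (isClosed_discrete {(QuotientGroup.mk (α g₀) : H ⧸ i.2.toSubgroup)})
      have h2 : IsClosed {g : G |
          ∀ p : ℕ, p.Prime → p ∣ orderOf (QuotientGroup.mk g : G ⧸ i.1.toSubgroup) → p ∈ P} :=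
        IsClosed.preimage QuotientGroup.continuous_mk
          (isClosed_discrete {y : G ⧸ i.1.toSubgroup | ∀ p : ℕ, p.Prime → p ∣ orderOf y → p ∈ P})
      exact h1.inter h2
    have hne : ∀ i, (S i).Nonempty := by
      rintro ⟨U, V⟩
      set N : Subgroup G := U.toSubgroup ⊓ V.toSubgroup.comap α with hN
      haveI : (V.toSubgroup.comap α).Normal := Subgroup.Normal.comap inferInstance α
      haveI hNn : N.Normal := Subgroup.normal_inf_normal _ _
      have hNo : IsOpen (N : Set G) := by
        rw [hN, Subgroup.coe_inf, Subgroup.coe_comap]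
        exact U.toOpenSubgroup.isOpen.inter (V.toOpenSubgroup.isOpen.preimage hα)
      haveI : Finite (G ⧸ N) := Subgroup.quotient_finite_of_isOpen N hNo
      haveI : Finite (H ⧸ V.toSubgroup) :=
        Subgroup.quotient_finite_of_isOpen _ V.toOpenSubgroup.isOpen
      obtain ⟨k, hk1, hk2⟩ :=
        exists_good_pow P (QuotientGroup.mk g₀ : G ⧸ N) (orderOf_pos _)
      refine ⟨g₀ ^ k, ?_, ?_⟩
      · have hd : orderOf (QuotientGroup.mk (α g₀) : H ⧸ V.toSubgroup) ∣
            orderOf (QuotientGroup.mk g₀ : G ⧸ N) :=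
          orderOf_mk_map_dvd α inf_le_right g₀
        have hdP : ∀ p : ℕ, p.Prime →
            p ∣ orderOf (QuotientGroup.mk (α g₀) : H ⧸ V.toSubgroup) → p ∈ P :=
          fun p hp hpd => hh V.toSubgroup inferInstance V.toOpenSubgroup.isOpen p hp hpd
        have hmod : k % orderOf (QuotientGroup.mk (α g₀) : H ⧸ V.toSubgroup) =
            1 % orderOf (QuotientGroup.mk (α g₀) : H ⧸ V.toSubgroup) := hk2 _ hd hdP
        show (QuotientGroup.mk (α (g₀ ^ k)) : H ⧸ V.toSubgroup) = QuotientGroup.mk (α g₀)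
        rw [map_pow]
        have : (QuotientGroup.mk ((α g₀) ^ k) : H ⧸ V.toSubgroup) =
            (QuotientGroup.mk (α g₀) : H ⧸ V.toSubgroup) ^ k := by
          simp [QuotientGroup.mk_pow]
        rw [this, ← pow_mod_orderOf, hmod, pow_mod_orderOf, pow_one]
      · intro p hp hpd
        have h1 : orderOf (QuotientGroup.mk (g₀ ^ k) : G ⧸ U.toSubgroup) ∣
            orderOf (QuotientGroup.mk (g₀ ^ k) : G ⧸ N) :=
          orderOf_mk_dvd_of_le inf_le_left _
        have h2 : (QuotientGroup.mk (g₀ ^ k) : G ⧸ N) =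
            (QuotientGroup.mk g₀ : G ⧸ N) ^ k := by
          simp [QuotientGroup.mk_pow]
        exact hk1 p hp (hpd.trans (h2 ▸ h1))
    have hdir : Directed (· ⊇ ·) S := by
      rintro ⟨U1, V1⟩ ⟨U2, V2⟩
      refine ⟨(U1 ⊓ U2, V1 ⊓ V2), ?_, ?_⟩
      · rintro g ⟨hg1, hg2⟩
        constructor
        · have hle : (V1 ⊓ V2 : OpenNormalSubgroup H).toSubgroup ≤
              V1.toSubgroup.comap (MonoidHom.id H) := fun x hx => hx.1
          have := congrArg (QuotientGroup.map _ V1.toSubgroup (MonoidHom.id H) hle) hg1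
          simpa [QuotientGroup.map_mk] using this
        · intro p hp hpd
          exact hg2 p hp (hpd.trans (orderOf_mk_dvd_of_le (inf_le_left :
            (U1 ⊓ U2 : OpenNormalSubgroup G).toSubgroup ≤ U1.toSubgroup) g))
      · rintro g ⟨hg1, hg2⟩
        constructor
        · have hle : (V1 ⊓ V2 : OpenNormalSubgroup H).toSubgroup ≤
              V2.toSubgroup.comap (MonoidHom.id H) := fun x hx => hx.2
          have := congrArg (QuotientGroup.map _ V2.toSubgroup (MonoidHom.id H) hle) hg1
          simpa [QuotientGroup.map_mk] using this
        · intro p hp hpd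
          exact hg2 p hp (hpd.trans (orderOf_mk_dvd_of_le (inf_le_right :
            (U1 ⊓ U2 : OpenNormalSubgroup G).toSubgroup ≤ U2.toSubgroup) g))
    haveI : Nonempty (OpenNormalSubgroup G × OpenNormalSubgroup H) :=
      ⟨⟨⟨⊤, (⊤ : Subgroup _).normal_of_characteristic⟩, ⟨⊤, (⊤ : Subgroup _).normal_of_characteristic⟩⟩⟩
    obtain ⟨g, hg⟩ := IsCompact.nonempty_iInter_of_directed_nonempty_isCompact_isClosed S hdir hne
      (fun i => (hclosed i).isCompact) hclosed
    simp only [Set.mem_iInter] at hg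
    refine ⟨g, ?_, ?_⟩
    · intro U hUn hUo p hp hpd
      exact (hg (⟨⟨U, hUo⟩, hUn⟩, ⟨⊤, (⊤ : Subgroup _).normal_of_characteristic⟩)).2 p hp hpd
    · by_contra hne'
      have hz : (α g)⁻¹ * α g₀ ≠ 1 := fun e => hne' (inv_mul_eq_one.mp e)
      obtain ⟨W, hW, h1W, hzW⟩ := exists_isClopen_of_totally_separated
        (i := (1 : H)) (j := (α g)⁻¹ * α g₀) (fun e => hz e.symm)
      obtain ⟨V, hV⟩ := IsTopologicalGroup.exist_openNormalSubgroup_sub_clopen_nhds_of_one hW h1W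
      have hmk := (hg (⟨⊤, (⊤ : Subgroup _).normal_of_characteristic⟩, V)).1
      rw [QuotientGroup.eq] at hmk
      exact hzW (hV hmk)
end

section
/- Let k be a field, V a finite-dimensional vector space over k, G a group, and ρ : G → GL(V) a representation such that V is semisimple as a module over the group algebra k[G]. Let N be an abelian normal subgroup of G and let g ∈ N be such that the automorphism ρ(g) of V is unipotent, i.e. ρ(g) − id_V is nilpotent. Then ρ(g) = id_V. (In particular, in a semisimple representation, an element of a normal abelian subgroup acting unipotently acts trivially.) -/
/-- A nilpotent endomorphism has a nonzero kernel vector inside any nonzero stable submodule. -/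
private lemma aux_ker {k V : Type*} [Field k] [AddCommGroup V] [Module k V]
    (f : Module.End k V) (hf : IsNilpotent f) (W : Submodule k V) (hW : W ≠ ⊥)
    (hstab : ∀ v ∈ W, f v ∈ W) :
    ∃ v ∈ W, v ≠ 0 ∧ f v = 0 := by
  obtain ⟨m, hm⟩ := hf
  obtain ⟨v₀, hv₀W, hv₀⟩ := (Submodule.ne_bot_iff W).1 hW
  have hex : ∃ j : ℕ, (f ^ j) v₀ = 0 := ⟨m, by rw [hm]; rfl⟩
  classical
  set j := Nat.find hex with hj
  have hj0 : j ≠ 0 := by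
    intro h
    have := Nat.find_spec hex
    rw [← hj, h, pow_zero] at this
    exact hv₀ this
  obtain ⟨i, hi⟩ : ∃ i, j = i + 1 := ⟨j - 1, (Nat.succ_pred_eq_of_pos (Nat.pos_of_ne_zero hj0)).symm⟩
  have hmemW : ∀ n : ℕ, (f ^ n) v₀ ∈ W := by
    intro n
    induction n with
    | zero => simpa using hv₀W
    | succ n ihn => rw [pow_succ', Module.End.mul_apply]; exact hstab _ ihn
  refine ⟨(f ^ i) v₀, hmemW i, ?_, ?_⟩
  · have := Nat.find_min hex (by omega : i < j)
    exact this
  · have := Nat.find_spec hex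
    rw [← hj, hi, pow_succ', Module.End.mul_apply] at this
    exact this

/-- Pairwise-commuting nilpotent endomorphisms have a nonzero common-kernel vector in any
nonzero stable submodule of a finite-dimensional space. -/
private lemma aux_common {k V ι : Type*} [Field k] [AddCommGroup V] [Module k V]
    [FiniteDimensional k V] (u : ι → Module.End k V) (hnil : ∀ i, IsNilpotent (u i))
    (hcomm : ∀ i j, Commute (u i) (u j)) (W : Submodule k V) (hW : W ≠ ⊥)
    (hstab : ∀ i, ∀ v ∈ W, u i v ∈ W) :
    ∃ v ∈ W, v ≠ 0 ∧ ∀ i, u i v = 0 := by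
  suffices H : ∀ (n : ℕ) (W : Submodule k V), Module.finrank k W ≤ n → W ≠ ⊥ →
      (∀ i, ∀ v ∈ W, u i v ∈ W) → ∃ v ∈ W, v ≠ 0 ∧ ∀ i, u i v = 0 from
    H (Module.finrank k W) W le_rfl hW hstab
  intro n
  induction n with
  | zero =>
    intro W hr hW _
    exact absurd (Submodule.finrank_eq_zero.mp (Nat.le_zero.mp hr)) hW
  | succ n ih =>
    intro W hr hW hstab
    by_cases hall : ∀ i, ∀ v ∈ W, u i v = 0
    · obtain ⟨v, hvW, hv⟩ := (Submodule.ne_bot_iff W).1 hW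
      exact ⟨v, hvW, hv, fun i => hall i v hvW⟩
    · push_neg at hall
      obtain ⟨i₀, v₀, hv₀W, hv₀⟩ := hall
      set W' := W ⊓ LinearMap.ker (u i₀) with hW'def
      have hW' : W' ≠ ⊥ := by
        obtain ⟨w, hwW, hw0, hwker⟩ := aux_ker (u i₀) (hnil i₀) W hW (hstab i₀)
        exact (Submodule.ne_bot_iff W').2 ⟨w, Submodule.mem_inf.2 ⟨hwW, LinearMap.mem_ker.2 hwker⟩, hw0⟩
      have hstab' : ∀ i, ∀ v ∈ W', u i v ∈ W' := by
        intro i v hv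
        obtain ⟨hvW, hvker⟩ := Submodule.mem_inf.1 hv
        refine Submodule.mem_inf.2 ⟨hstab i v hvW, LinearMap.mem_ker.2 ?_⟩
        have h1 : u i₀ (u i v) = u i (u i₀ v) := by
          rw [← Module.End.mul_apply, ← Module.End.mul_apply, (hcomm i₀ i).eq]
        rw [h1, LinearMap.mem_ker.1 hvker, map_zero]
      have hlt : W' < W := by
        refine lt_of_le_of_ne inf_le_left (fun h => hv₀ ?_)
        have : v₀ ∈ W' := h ▸ hv₀W
        exact LinearMap.mem_ker.1 (Submodule.mem_inf.1 this).2
      have hr' : Module.finrank k W' ≤ n := by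
        have := Submodule.finrank_lt_finrank_of_lt hlt
        omega
      obtain ⟨v, hvW', hv0, hvker⟩ := ih W' hr' hW' hstab'
      exact ⟨v, (Submodule.mem_inf.1 hvW').1, hv0, hvker⟩

/-- Let `k` be a field, `V` a finite-dimensional `k`-vector space, `G` a
group and `ρ` a representation of `G` on `V` that is semisimple (i.e. `V` is a semisimple
module over the group algebra `k[G]`). Let `N` be an abelian normal subgroup of `G` and
let `g ∈ N` act unipotently (i.e. `ρ g - 1` is nilpotent). Then `ρ g = 1`. -/
theorem stmt9 (k : Type*) [Field k]
    (V : Type*) [AddCommGroup V] [Module k V] [FiniteDimensional k V]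
    (G : Type*) [Group G]
    (ρ : Representation k G V)
    (hss : IsSemisimpleModule (MonoidAlgebra k G) ρ.asModule)
    (N : Subgroup G) (hNnormal : N.Normal)
    (hNab : ∀ a ∈ N, ∀ b ∈ N, a * b = b * a)
    (g : G) (hg : g ∈ N)
    (hunip : IsNilpotent (ρ g - 1)) :
    ρ g = 1 := by
  classical
  set u : G → Module.End k V := fun h => ρ (h * g * h⁻¹) - 1 with hu
  have hmem : ∀ h : G, h * g * h⁻¹ ∈ N := fun h => hNnormal.conj_mem g hg h
  -- the conjugates commute
  have hcommG : ∀ h₁ h₂ : G, Commute (u h₁) (u h₂) := by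
    intro h₁ h₂
    have hc : Commute (ρ (h₁ * g * h₁⁻¹)) (ρ (h₂ * g * h₂⁻¹)) := by
      unfold Commute SemiconjBy
      rw [← map_mul, ← map_mul, hNab _ (hmem h₁) _ (hmem h₂)]
    exact (hc.sub_right (Commute.one_right _)).sub_left (Commute.one_left _)
  -- the conjugates are nilpotent
  have hnilG : ∀ h : G, IsNilpotent (u h) := by
    intro h
    obtain ⟨m, hm⟩ := hunip
    refine ⟨m, ?_⟩
    have hsemi : SemiconjBy (ρ h) (ρ g - 1) (u h) := by
      unfold SemiconjBy
      rw [hu]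
      simp only [mul_sub, sub_mul, mul_one, one_mul, ← map_mul]
      congr 2
      group
    have h1 := (hsemi.pow_right m).eq
    rw [hm, mul_zero] at h1
    have h2 : (u h) ^ m * (ρ h * ρ h⁻¹) = 0 := by
      rw [← mul_assoc, ← h1, zero_mul]
    rwa [← map_mul, mul_inv_cancel, map_one, mul_one] at h2
  -- the conjugation relation
  have hconj : ∀ h h' : G, (u h) * ρ h' = ρ h' * u (h'⁻¹ * h) := by
    intro h h'
    rw [hu]
    simp only [mul_sub, sub_mul, mul_one, one_mul, ← map_mul]
    congr 2
    group
  -- smul is the algebra action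
  have hsmul_eq : ∀ (r : MonoidAlgebra k G) (v : ρ.asModule),
      r • v = ρ.asAlgebraHom r (ρ.asModuleEquiv v) := fun r v => rfl
  -- the common kernel, as a submodule over the monoid algebra
  let W : Submodule (MonoidAlgebra k G) ρ.asModule :=
  { carrier := {v : ρ.asModule | ∀ h : G, u h (ρ.asModuleEquiv v) = 0}
    add_mem' := fun {a b} ha hb h => by
      rw [map_add, map_add, ha h, hb h, add_zero]
    zero_mem' := fun h => by rw [map_zero, map_zero]
    smul_mem' := by
      intro r v hv
      rw [Set.mem_setOf_eq] at hv ⊢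
      intro h
      rw [hsmul_eq]
      show u h (ρ.asAlgebraHom r (ρ.asModuleEquiv v)) = 0
      revert h
      induction r using MonoidAlgebra.induction_on with
      | of h' =>
        intro h
        rw [Representation.asAlgebraHom_of]
        have hc := DFunLike.congr_fun (hconj h h') (ρ.asModuleEquiv v)
        rw [Module.End.mul_apply, Module.End.mul_apply] at hc
        rw [hc, hv _, map_zero]
      | add f₁ f₂ hf₁ hf₂ =>
        intro h
        rw [map_add, LinearMap.add_apply, map_add, hf₁ h, hf₂ h, add_zero]
      | smul c f hf =>
        intro h
        rw [map_smul, LinearMap.smul_apply, map_smul, hf h, smul_zero] }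
  haveI : IsScalarTower k (MonoidAlgebra k G) ρ.asModule :=
    ⟨fun c r v => by
      show ρ.asAlgebraHom (c • r) (ρ.asModuleEquiv v) = c • (ρ.asAlgebraHom r (ρ.asModuleEquiv v))
      rw [map_smul, LinearMap.smul_apply]⟩
  haveI : FiniteDimensional k ρ.asModule := ‹FiniteDimensional k V›
  have hWtop : W = ⊤ := by
    refine le_antisymm le_top ?_
    rw [← IsSemisimpleModule.sSup_simples_eq_top (MonoidAlgebra k G) ρ.asModule]
    refine sSup_le ?_
    intro S hS
    rw [Set.mem_setOf_eq] at hS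
    have hatom : IsAtom S := isSimpleModule_iff_isAtom.1 hS
    set Sk : Submodule k ρ.asModule := Submodule.restrictScalars k S with hSk
    have hSk_ne : Sk ≠ ⊥ := by
      rw [hSk, Ne, Submodule.restrictScalars_eq_bot_iff]
      exact hatom.1
    have hstabS : ∀ h, ∀ v ∈ Sk, (u h : Module.End k ρ.asModule) v ∈ Sk := by
      intro h v hv
      have h1 : (u h : Module.End k ρ.asModule) v = ((MonoidAlgebra.of k G (h * g * h⁻¹)) • v : ρ.asModule) - v := by
        rw [hsmul_eq, Representation.asAlgebraHom_of]
        show (ρ (h * g * h⁻¹) - 1) (ρ.asModuleEquiv v) = _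
        rw [LinearMap.sub_apply, Module.End.one_apply]
        rfl
      rw [Submodule.restrictScalars_mem] at hv
      rw [h1]
      exact (Submodule.restrictScalars_mem k S _).2 (sub_mem (S.smul_mem _ hv) hv)
    obtain ⟨v, hvSk, hv0, hvker⟩ : ∃ v ∈ Sk, v ≠ 0 ∧ ∀ h, (u h : Module.End k ρ.asModule) v = 0 :=
      aux_common (V := V) (fun h => u h)
        hnilG hcommG Sk hSk_ne hstabS
    have hvW : v ∈ W := fun h => hvker h
    have hSW : S ⊓ W ≠ ⊥ := by
      rw [Submodule.ne_bot_iff]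
      exact ⟨v, Submodule.mem_inf.2 ⟨hvSk, hvW⟩, hv0⟩
    by_contra hSnotle
    have hlt : S ⊓ W < S := lt_of_le_of_ne inf_le_left (fun h => hSnotle (h ▸ inf_le_right))
    exact hSW (hatom.2 _ hlt)
  -- conclude
  ext v
  have hvW := Submodule.eq_top_iff'.mp hWtop v
  have := hvW 1
  have hu1 : u 1 = ρ g - 1 := by rw [hu]; simp
  rw [hu1] at this
  rw [LinearMap.sub_apply, Module.End.one_apply, sub_eq_zero] at this
  rw [Module.End.one_apply]
  exact this
end
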